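/- arXiv:2202.08032 — 2 statements merged into one kernel-verified Lean document; each statement's English description precedes it below -/
import Mathlib

section
/- The retraction $\Psi_{n,0}:M_n\to D_{n-1}$ obtained as the composition $\psi_{n,1}\circ\cdots\circ\psi_{n,i(n)}$ equals $\Psi_n=(r_{n-1}|_{D_{n-1}})^{-1}\circ r_{n-1}$. -/
open Set

noncomputable section

variable {Γ : Type*} [TopologicalSpace Γ] [DiscreteTopology Γ]

/-- `ℓ∞(Γ)`: the Banach space of bounded real functions on `Γ`
(carrying the discrete topology, so that boundedness is the only constraint). -/
abbrev Linf (Γ : Type*) [TopologicalSpace Γ] [DiscreteTopology Γ] : Type _ :=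
  BoundedContinuousFunction Γ ℝ

/-- The entire part of a real number, toward `0`: `[r] = sign(r)⌊|r|⌋`. -/
def ent (r : ℝ) : ℝ := Real.sign r * ⌊|r|⌋

lemma abs_ent_le (r : ℝ) : |ent r| ≤ |r| := by
  have hsign : |Real.sign r| ≤ 1 := by
    rcases lt_trichotomy r 0 with h | h | h
    · rw [Real.sign_of_neg h]; norm_num
    · rw [h, Real.sign_zero]; norm_num
    · rw [Real.sign_of_pos h]; norm_num
  have hfl : |(⌊|r|⌋ : ℝ)| ≤ |r| := by
    rw [abs_of_nonneg (by exact_mod_cast Int.floor_nonneg.mpr (abs_nonneg r))]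
    exact Int.floor_le _
  calc |ent r| = |Real.sign r| * |(⌊|r|⌋ : ℝ)| := abs_mul _ _
    _ ≤ 1 * |r| := mul_le_mul hsign hfl (abs_nonneg _) zero_le_one
    _ = |r| := one_mul _

/-- The coordinatewise quantization `f : ℓ∞(S) → ℓ∞(S)`, `f(x)(γ) = [x(γ)]`. -/
def quant (x : Linf Γ) : Linf Γ :=
  BoundedContinuousFunction.ofNormedAddCommGroup (fun γ => ent (x γ))
    continuous_of_discreteTopology ‖x‖ (fun γ => by
      rw [Real.norm_eq_abs]
      exact (abs_ent_le (x γ)).trans (by simpa using x.norm_coe_le_norm γ))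

/-- Scalar truncation at level `s`. -/
def truncFun (s t : ℝ) : ℝ := if |t| ≤ s then t else s * t / |t|

lemma abs_truncFun_le (s t : ℝ) : |truncFun s t| ≤ max |s| |t| := by
  unfold truncFun
  split_ifs with h
  · exact le_max_right _ _
  · by_cases ht : t = 0
    · simp [ht]
    · have hst : abs (s * t / |t|) = |s| := by
        rw [abs_div, abs_mul, abs_abs, mul_div_assoc, div_self (abs_ne_zero.mpr ht), mul_one]
      rw [hst]; exact le_max_left _ _

/-- The truncation of radius `s`: `T_s(x)(γ) = x(γ)` if `|x(γ)| ≤ s`,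
and `= s·x(γ)/|x(γ)|` otherwise. -/
def trunc (s : ℝ) (x : Linf Γ) : Linf Γ :=
  BoundedContinuousFunction.ofNormedAddCommGroup (fun γ => truncFun s (x γ))
    continuous_of_discreteTopology (max |s| ‖x‖) (fun γ => by
      rw [Real.norm_eq_abs]
      exact (abs_truncFun_le s (x γ)).trans
        (max_le_max le_rfl (by simpa using x.norm_coe_le_norm γ)))

/-- The restriction operator `r_S : ℓ∞(Γ) → ℓ∞(S)`, where `ℓ∞(S)` is identified
isometrically with the subspace of `ℓ∞(Γ)` of functions vanishing off `S`. -/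
def restr (S : Set Γ) (x : Linf Γ) : Linf Γ :=
  BoundedContinuousFunction.ofNormedAddCommGroup (S.indicator x)
    continuous_of_discreteTopology ‖x‖ (fun γ => by
      rw [Real.norm_eq_abs]
      by_cases h : γ ∈ S
      · rw [Set.indicator_of_mem h]
        simpa using x.norm_coe_le_norm γ
      · rw [Set.indicator_of_notMem h]
        simp)

/-- The ball `s·B_{ℓ∞(S)}`, viewed inside `ℓ∞(Γ)`: functions supported on `S`
of norm at most `s`. -/
def suppBall (S : Set Γ) (s : ℝ) : Set (Linf Γ) :=
  {x | (∀ γ ∉ S, x γ = 0) ∧ ‖x‖ ≤ s}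

/-- `chain T a b = T (a+1) ∘ ⋯ ∘ T b` (the identity if `b ≤ a`). -/
def chain {α : Type*} (T : ℕ → α → α) (a b : ℕ) : α → α :=
  Nat.rec id (fun k ih => ih ∘ T (a + k + 1)) (b - a)

/-- Bourgain–Delbaen data on `Γ`: a strictly increasing sequence of nonempty finite
sets `Γs n` (for `n ≥ 1`) with union `Γ`, together with compatible bounded linear
extension operators `i n : ℓ∞(Γ_n) → ℓ∞(Γ)` (realized as operators on `ℓ∞(Γ)`
factoring through the restriction `restr (Γs n)`), with norms bounded by the
positive integer `lam`. -/
structure BD (Γ : Type*) [TopologicalSpace Γ] [DiscreteTopology Γ] where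
  Γs : ℕ → Set Γ
  lam : ℕ
  i : ℕ → Linf Γ →L[ℝ] Linf Γ
  one_le_lam : 1 ≤ lam
  finite : ∀ n, 1 ≤ n → (Γs n).Finite
  nonempty : ∀ n, 1 ≤ n → (Γs n).Nonempty
  ssubset : ∀ n, 1 ≤ n → Γs n ⊂ Γs (n + 1)
  iUnion_eq : ⋃ n ∈ {k : ℕ | 1 ≤ k}, Γs n = Set.univ
  extension : ∀ n, 1 ≤ n → ∀ x : Linf Γ, ∀ γ ∈ Γs n, i n x γ = x γ
  factor : ∀ n, 1 ≤ n → ∀ x : Linf Γ, i n (restr (Γs n) x) = i n x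
  compatible : ∀ n m, 1 ≤ n → n < m → ∀ x : Linf Γ, i m (restr (Γs m) (i n x)) = i n x
  norm_i_le : ∀ n, 1 ≤ n → ‖i n‖ ≤ (lam : ℝ)

namespace BD

/-- `s n = λ^n`. -/
def s (B : BD Γ) (n : ℕ) : ℝ := (B.lam : ℝ) ^ n

/-- The sets `M_n` (with `M_0 = ∅`):
`M_n = M_{n-1} ∪ (f ∘ i_n)(f(s_n B_{ℓ∞(Γ_n)}) \ r_n(M_{n-1}))`. -/
def M (B : BD Γ) : ℕ → Set (Linf Γ)
  | 0 => ∅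
  | n + 1 =>
      M B n ∪
        (fun z => quant (B.i (n + 1) z)) ''
          (quant '' suppBall (B.Γs (n + 1)) (B.s (n + 1)) \ restr (B.Γs (n + 1)) '' M B n)

/-- `M = ⋃ n, M_n`. -/
def Mtot (B : BD Γ) : Set (Linf Γ) := ⋃ n, B.M n

/-- `C_n = (f ∘ i_{n+1} ∘ f ∘ T_{s_{n+1}} ∘ r_{n+1} ∘ i_n)
(f(s_{n+1}B_{ℓ∞(Γ_n)}) \ f(s_n B_{ℓ∞(Γ_n)}))`. -/
def C (B : BD Γ) (n : ℕ) : Set (Linf Γ) :=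
  (fun z => quant (B.i (n + 1) (quant (trunc (B.s (n + 1)) (restr (B.Γs (n + 1)) (B.i n z)))))) ''
    (quant '' suppBall (B.Γs n) (B.s (n + 1)) \ quant '' suppBall (B.Γs n) (B.s n))

/-- `D_n = M_n ∪ C_n`. -/
def D (B : BD Γ) (n : ℕ) : Set (Linf Γ) := B.M n ∪ B.C n

end BD

/-! ### Auxiliary lemmas -/

lemma ent_intCast (m : ℤ) : ent (m : ℝ) = m := by
  unfold ent
  rcases lt_trichotomy (m : ℝ) 0 with h | h | h
  · rw [Real.sign_of_neg h, abs_of_neg h]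
    rw [show ((-(m:ℝ)) = ((-m : ℤ) : ℝ)) by push_cast; ring, Int.floor_intCast]
    push_cast; ring
  · simp [h, Real.sign_zero]
  · rw [Real.sign_of_pos h, abs_of_pos h, Int.floor_intCast, one_mul]

lemma ent_isInt (r : ℝ) : ∃ m : ℤ, ent r = m := by
  unfold ent
  rcases lt_trichotomy r 0 with h | h | h
  · exact ⟨-⌊|r|⌋, by rw [Real.sign_of_neg h]; push_cast; ring⟩
  · exact ⟨0, by simp [h]⟩
  · exact ⟨⌊|r|⌋, by rw [Real.sign_of_pos h, one_mul]⟩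

lemma ent_zero : ent (0:ℝ) = 0 := by simp [ent]

lemma quant_apply (x : Linf Γ) (γ : Γ) : quant x γ = ent (x γ) := rfl
lemma restr_apply (S : Set Γ) (x : Linf Γ) (γ : Γ) : restr S x γ = S.indicator x γ := rfl
lemma trunc_apply (s : ℝ) (x : Linf Γ) (γ : Γ) : trunc s x γ = truncFun s (x γ) := rfl

/-- Integer-valued bounded functions. -/
def IntV (x : Linf Γ) : Prop := ∀ γ, ∃ m : ℤ, x γ = m

/-- Functions supported in `S`. -/
def SuppIn (S : Set Γ) (x : Linf Γ) : Prop := ∀ γ ∉ S, x γ = 0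

lemma intV_quant (x : Linf Γ) : IntV (quant x) := fun γ => ent_isInt _

lemma quant_eq_self {x : Linf Γ} (h : IntV x) : quant x = x := by
  apply BoundedContinuousFunction.ext
  intro γ
  obtain ⟨m, hm⟩ := h γ
  rw [quant_apply, hm, ent_intCast]

lemma intV_add {x z : Linf Γ} (hx : IntV x) (hz : IntV z) : IntV (x + z) := by
  intro γ
  obtain ⟨m, hm⟩ := hx γ; obtain ⟨m', hm'⟩ := hz γ
  exact ⟨m + m', by push_cast; simp [hm, hm']⟩

lemma intV_restr (S : Set Γ) {x : Linf Γ} (h : IntV x) : IntV (restr S x) := by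
  intro γ
  rw [restr_apply]
  by_cases hγ : γ ∈ S
  · rw [Set.indicator_of_mem hγ]; exact h γ
  · exact ⟨0, by rw [Set.indicator_of_notMem hγ]; simp⟩

lemma suppIn_quant {S : Set Γ} {x : Linf Γ} (h : SuppIn S x) : SuppIn S (quant x) :=
  fun γ hγ => by rw [quant_apply, h γ hγ, ent_zero]

lemma suppIn_restr (S : Set Γ) (x : Linf Γ) : SuppIn S (restr S x) :=
  fun γ hγ => by rw [restr_apply, Set.indicator_of_notMem hγ]

lemma suppIn_add {S : Set Γ} {x z : Linf Γ} (hx : SuppIn S x) (hz : SuppIn S z) :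
    SuppIn S (x + z) := fun γ hγ => by
  have : x γ + z γ = 0 := by rw [hx γ hγ, hz γ hγ, add_zero]
  simpa using this

lemma restr_restr {S T : Set Γ} (h : S ⊆ T) (x : Linf Γ) :
    restr S (restr T x) = restr S x := by
  apply BoundedContinuousFunction.ext
  intro γ
  rw [restr_apply, restr_apply]
  by_cases hγ : γ ∈ S
  · rw [Set.indicator_of_mem hγ, Set.indicator_of_mem hγ, restr_apply,
      Set.indicator_of_mem (h hγ)]
  · rw [Set.indicator_of_notMem hγ, Set.indicator_of_notMem hγ]

lemma restr_add (S : Set Γ) (x z : Linf Γ) :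
    restr S (x + z) = restr S x + restr S z := by
  apply BoundedContinuousFunction.ext
  intro γ
  show S.indicator (⇑(x + z)) γ = S.indicator x γ + S.indicator z γ
  by_cases hγ : γ ∈ S <;>
    simp [Set.indicator_of_mem, Set.indicator_of_notMem, hγ]

lemma restr_of_suppIn {S : Set Γ} {x : Linf Γ} (h : SuppIn S x) : restr S x = x := by
  apply BoundedContinuousFunction.ext
  intro γ
  rw [restr_apply]
  by_cases hγ : γ ∈ S
  · rw [Set.indicator_of_mem hγ]
  · rw [Set.indicator_of_notMem hγ, h γ hγ]

lemma restr_eq_zero_of_disjoint {S T : Set Γ} {x : Linf Γ} (h : SuppIn T x)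
    (hd : ∀ γ ∈ S, γ ∉ T) : restr S x = 0 := by
  apply BoundedContinuousFunction.ext
  intro γ
  rw [restr_apply]
  by_cases hγ : γ ∈ S
  · rw [Set.indicator_of_mem hγ, h γ (hd γ hγ)]; rfl
  · rw [Set.indicator_of_notMem hγ]; rfl

lemma truncFun_zero (s : ℝ) : truncFun s 0 = 0 := by
  unfold truncFun; split_ifs <;> simp

lemma abs_truncFun_le' {s : ℝ} (hs : 0 ≤ s) (t : ℝ) : |truncFun s t| ≤ s := by
  unfold truncFun
  split_ifs with h
  · exact h
  · have ht : t ≠ 0 := by intro h0; rw [h0, abs_zero] at h; exact h hs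
    have : abs (s * t / |t|) = |s| := by
      rw [abs_div, abs_mul, abs_abs, mul_div_assoc, div_self (abs_ne_zero.mpr ht), mul_one]
    rw [this, abs_of_nonneg hs]

lemma truncFun_isInt {s t : ℝ} (hs : ∃ m : ℤ, s = m) (ht : ∃ m : ℤ, t = m) :
    ∃ m : ℤ, truncFun s t = m := by
  unfold truncFun
  split_ifs with h
  · exact ht
  · obtain ⟨ms, rfl⟩ := hs
    by_cases ht0 : t = 0
    · exact ⟨0, by rw [ht0]; simp⟩
    rcases lt_or_gt_of_ne ht0 with hlt | hgt
    · exact ⟨-ms, by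
        rw [abs_of_neg hlt, div_neg, mul_div_assoc, div_self (ne_of_lt hlt), mul_one]
        push_cast; ring⟩
    · exact ⟨ms, by
        rw [abs_of_pos hgt, mul_div_assoc, div_self (ne_of_gt hgt), mul_one]⟩

lemma abs_add_truncFun_le {s : ℝ} (hs : 0 ≤ s) (a t : ℝ) :
    |a + truncFun s t| ≤ max |a| |a + t| := by
  unfold truncFun
  split_ifs with h
  · exact le_max_right _ _
  · push_neg at h
    have ht0 : t ≠ 0 := by intro h0; rw [h0, abs_zero] at h; exact absurd hs (not_le.mpr h)
    rcases lt_or_gt_of_ne ht0 with hlt | hgt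
    · have : s * t / |t| = -s := by
        rw [abs_of_neg hlt, div_neg, mul_div_assoc, div_self (ne_of_lt hlt), mul_one]
      rw [this]
      have h1 : a + t ≤ a + -s := by have := abs_of_neg hlt; linarith [h]
      have h2 : a + -s ≤ a := by linarith
      rw [max_comm]
      exact abs_le_max_abs_abs h1 h2
    · have : s * t / |t| = s := by
        rw [abs_of_pos hgt, mul_div_assoc, div_self (ne_of_gt hgt), mul_one]
      rw [this]
      have h1 : a ≤ a + s := by linarith
      have h2 : a + s ≤ a + t := by have := abs_of_pos hgt; linarith [h]
      exact abs_le_max_abs_abs h1 h2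
lemma norm_quant_le (x : Linf Γ) : ‖quant x‖ ≤ ‖x‖ := by
  rw [BoundedContinuousFunction.norm_le (norm_nonneg x)]
  intro γ
  rw [quant_apply, Real.norm_eq_abs]
  exact (abs_ent_le (x γ)).trans (by simpa using x.norm_coe_le_norm γ)

lemma abs_apply_le_norm (x : Linf Γ) (γ : Γ) : |x γ| ≤ ‖x‖ := by
  simpa using x.norm_coe_le_norm γ

/-- A nonzero integer-valued bounded function attains its norm, which is a positive integer. -/
lemma exists_norm_attained {g : Linf Γ} (hInt : IntV g) (hne : g ≠ 0) :
    ∃ γ₁, ‖g‖ = |g γ₁| ∧ (1 : ℝ) ≤ |g γ₁| := by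
  have hex : ∃ γ₀, g γ₀ ≠ 0 := by
    by_contra hc
    push_neg at hc
    exact hne (BoundedContinuousFunction.ext fun γ => by rw [hc γ]; rfl)
  obtain ⟨γ₀, hγ₀⟩ := hex
  have h1 : (1 : ℝ) ≤ |g γ₀| := by
    obtain ⟨m, hm⟩ := hInt γ₀
    rw [hm]
    rw [hm] at hγ₀
    have : m ≠ 0 := by exact_mod_cast hγ₀
    exact_mod_cast Int.one_le_abs (by exact_mod_cast this)
  have hnorm1 : (1 : ℝ) ≤ ‖g‖ := le_trans h1 (abs_apply_le_norm g γ₀)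
  have hex2 : ∃ γ₁, ‖g‖ - 1/2 < |g γ₁| := by
    by_contra hc
    push_neg at hc
    have : ‖g‖ ≤ ‖g‖ - 1/2 := by
      rw [BoundedContinuousFunction.norm_le (by linarith)]
      intro γ; rw [Real.norm_eq_abs]; exact hc γ
    linarith
  obtain ⟨γ₁, hγ₁⟩ := hex2
  have hmax : ∀ γ, |g γ| ≤ |g γ₁| := by
    intro γ
    obtain ⟨m, hm⟩ := hInt γ
    obtain ⟨m₁, hm₁⟩ := hInt γ₁
    rw [hm, hm₁]
    rw [hm₁] at hγ₁
    have hle : |(m : ℝ)| ≤ ‖g‖ := hm ▸ abs_apply_le_norm g γ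
    have : |(m : ℝ)| < |(m₁ : ℝ)| + 1 := by linarith
    have : |m| < |m₁| + 1 := by exact_mod_cast this
    have : |m| ≤ |m₁| := by omega
    exact_mod_cast this
  have : ‖g‖ ≤ |g γ₁| := by
    rw [BoundedContinuousFunction.norm_le (abs_nonneg _)]
    intro γ; rw [Real.norm_eq_abs]; exact hmax γ
  exact ⟨γ₁, le_antisymm this (abs_apply_le_norm g γ₁), le_trans h1 (hmax γ₀)⟩

namespace BD

lemma one_le_s (B : BD Γ) (m : ℕ) : (1 : ℝ) ≤ B.s m :=
  one_le_pow₀ (by exact_mod_cast B.one_le_lam)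

lemma s_nonneg (B : BD Γ) (m : ℕ) : (0 : ℝ) ≤ B.s m := le_trans zero_le_one (B.one_le_s m)

lemma s_mono (B : BD Γ) {a b : ℕ} (h : a ≤ b) : B.s a ≤ B.s b :=
  pow_le_pow_right₀ (by exact_mod_cast B.one_le_lam) h

lemma lam_mul_s (B : BD Γ) (m : ℕ) : (B.lam : ℝ) * B.s m = B.s (m + 1) := by
  rw [s, s, pow_succ]; ring

/-- Elements of `M m` are integer-valued. -/
lemma M_intV (B : BD Γ) : ∀ m, ∀ u ∈ B.M m, IntV u := by
  intro m
  induction m with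
  | zero => intro u hu; exact absurd hu (by simp [BD.M])
  | succ m ih =>
    intro u hu
    rcases hu with hu | hu
    · exact ih u hu
    · obtain ⟨z, _, rfl⟩ := hu
      exact intV_quant _

/-- Elements of `C m` are integer-valued. -/
lemma C_intV (B : BD Γ) (m : ℕ) {u : Linf Γ} (hu : u ∈ B.C m) : IntV u := by
  obtain ⟨z, _, rfl⟩ := hu
  exact intV_quant _

/-- Global bound for elements of `M m`. -/
lemma M_bound (B : BD Γ) : ∀ m, ∀ u ∈ B.M m, ∀ γ, |u γ| ≤ B.s (m + 1) := by
  intro m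
  induction m with
  | zero => intro u hu; exact absurd hu (by simp [BD.M])
  | succ m ih =>
    intro u hu γ
    rcases hu with hu | hu
    · exact le_trans (ih u hu γ) (B.s_mono (by omega))
    · obtain ⟨z, ⟨hz1, _⟩, rfl⟩ := hu
      obtain ⟨v, ⟨_, hvnorm⟩, rfl⟩ := hz1
      rw [quant_apply]
      have h1 : |B.i (m+1) (quant v) γ| ≤ ‖B.i (m+1) (quant v)‖ :=
        abs_apply_le_norm _ γ
      have h2 : ‖B.i (m+1) (quant v)‖ ≤ (B.lam : ℝ) * ‖quant v‖ := by
        calc ‖B.i (m+1) (quant v)‖ ≤ ‖B.i (m+1)‖ * ‖quant v‖ :=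
              (B.i (m+1)).le_opNorm _
          _ ≤ (B.lam : ℝ) * ‖quant v‖ :=
              mul_le_mul_of_nonneg_right (B.norm_i_le (m+1) (by omega)) (norm_nonneg _)
      have h3 : ‖quant v‖ ≤ B.s (m+1) := le_trans (norm_quant_le v) hvnorm
      calc |ent (B.i (m+1) (quant v) γ)| ≤ |B.i (m+1) (quant v) γ| := abs_ent_le _
        _ ≤ (B.lam : ℝ) * B.s (m+1) := le_trans h1 (le_trans h2
            (mul_le_mul_of_nonneg_left h3 (by positivity)))
        _ = B.s (m+2) := B.lam_mul_s (m+1)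

/-- Bound for elements of `C m` on `Γ_{m+1}`. -/
lemma C_bound (B : BD Γ) (m : ℕ) {u : Linf Γ} (hu : u ∈ B.C m) :
    ∀ γ ∈ B.Γs (m + 1), |u γ| ≤ B.s (m + 1) := by
  obtain ⟨z, _, rfl⟩ := hu
  intro γ hγ
  rw [quant_apply]
  set q₂ := quant (trunc (B.s (m+1)) (restr (B.Γs (m+1)) (B.i m z))) with hq₂
  rw [B.extension (m+1) (by omega) q₂ γ hγ]
  calc |ent (q₂ γ)| ≤ |q₂ γ| := abs_ent_le _
    _ ≤ B.s (m+1) := by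
        rw [hq₂, quant_apply, trunc_apply]
        exact le_trans (abs_ent_le _) (abs_truncFun_le' (B.s_nonneg (m+1)) _)

/-- Combined bound for an element of `D (m+1)` at a point of `Γ_{m+2}`. -/
lemma D_bound (B : BD Γ) (m : ℕ) {u : Linf Γ} (hu : u ∈ B.D (m + 1)) :
    ∀ γ ∈ B.Γs (m + 2), |u γ| ≤ B.s (m + 2) := by
  intro γ hγ
  rcases hu with hu | hu
  · exact B.M_bound (m+1) u hu γ
  · exact B.C_bound (m+1) hu γ hγ

lemma D_intV (B : BD Γ) (m : ℕ) {u : Linf Γ} (hu : u ∈ B.D m) : IntV u := by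
  rcases hu with hu | hu
  · exact B.M_intV m u hu
  · exact B.C_intV m hu

/-- Decoding: an integer-valued function supported in `Γ_m` is recovered from
`quant (i m ·)` by restriction. -/
lemma decode (B : BD Γ) {m : ℕ} (hm : 1 ≤ m) {z : Linf Γ} (hz : IntV z)
    (hsupp : SuppIn (B.Γs m) z) : restr (B.Γs m) (quant (B.i m z)) = z := by
  apply BoundedContinuousFunction.ext
  intro γ
  rw [restr_apply]
  by_cases hγ : γ ∈ B.Γs m
  · rw [Set.indicator_of_mem hγ, quant_apply, B.extension m hm z γ hγ]
    obtain ⟨mz, hmz⟩ := hz γ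
    rw [hmz, ent_intCast]
  · rw [Set.indicator_of_notMem hγ, hsupp γ hγ]

/-- Elements of `C m` are recovered from their restriction to `Γ_{m+1}`. -/
lemma Q_of_C (B : BD Γ) (m : ℕ) {u : Linf Γ} (hu : u ∈ B.C m) :
    u = quant (B.i (m + 1) (restr (B.Γs (m + 1)) u)) := by
  obtain ⟨z, _, rfl⟩ := hu
  set w := quant (trunc (B.s (m+1)) (restr (B.Γs (m+1)) (B.i m z))) with hw
  have hint : IntV w := intV_quant _
  have hsupp : SuppIn (B.Γs (m+1)) w := by
    intro γ hγ
    rw [hw, quant_apply, trunc_apply, restr_apply, Set.indicator_of_notMem hγ,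
      truncFun_zero, ent_zero]
  rw [B.decode (by omega) hint hsupp]

/-- New elements of `M (m+1)` are recovered from their restriction to `Γ_{m+1}`,
and that restriction is not the restriction of any element of `M m`. -/
lemma Q_of_Mnew (B : BD Γ) (m : ℕ) {u : Linf Γ} (hu : u ∈ B.M (m + 1))
    (hnot : u ∉ B.M m) :
    u = quant (B.i (m + 1) (restr (B.Γs (m + 1)) u)) ∧
      restr (B.Γs (m + 1)) u ∉ restr (B.Γs (m + 1)) '' B.M m := by
  rcases hu with hu | hu
  · exact absurd hu hnot
  · obtain ⟨z, ⟨hz1, hz2⟩, rfl⟩ := hu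
    have hint : IntV z := by
      obtain ⟨v, _, rfl⟩ := hz1
      exact intV_quant _
    have hsupp : SuppIn (B.Γs (m+1)) z := by
      obtain ⟨v, ⟨hvsupp, _⟩, rfl⟩ := hz1
      exact suppIn_quant hvsupp
    have hdec : restr (B.Γs (m+1)) (quant (B.i (m+1) z)) = z :=
      B.decode (by omega) hint hsupp
    rw [hdec]
    exact ⟨rfl, hz2⟩

end BD
/-- Proposition (Step 3): `Ψ_{n,0} = ψ_{n,1} ∘ ⋯ ∘ ψ_{n,i(n)}` equals
`Ψ_n = (r_{n-1}|_{D_{n-1}})⁻¹ ∘ r_{n-1}` on `M_n`. -/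
theorem Psi_zero_eq_Psi (B : BD Γ) (n : ℕ) (hn : 2 ≤ n)
    (y : ℕ → Linf Γ) (hy0 : y 0 = 0) (hyinj : Function.Injective y)
    (hyrange : Set.range y =
      quant '' {z : Linf Γ | ∀ γ ∉ B.Γs n \ B.Γs (n - 1), z γ = 0})
    (hymono : ∀ j₁ j₂, j₁ ≤ j₂ → ‖y j₁‖ ≤ ‖y j₂‖)
    (kn : ℕ) (d : ℕ → Linf Γ)
    (hd_inj : Set.InjOn d (Set.Icc 1 kn))
    (hd_range : d '' Set.Icc 1 kn = B.D (n - 1))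
    (I : ℕ) (e : ℕ → ℕ × ℕ)
    (he_mem : ∀ i, 1 ≤ i → i ≤ I → 1 ≤ (e i).1 ∧ 1 ≤ (e i).2 ∧ (e i).2 ≤ kn ∧
      restr (B.Γs n \ B.Γs (n - 1)) (d (e i).2) + y (e i).1 ∈
        quant '' suppBall (B.Γs n \ B.Γs (n - 1)) (B.s n))
    (he_surj : ∀ p : ℕ × ℕ, 1 ≤ p.1 → 1 ≤ p.2 → p.2 ≤ kn →
      restr (B.Γs n \ B.Γs (n - 1)) (d p.2) + y p.1 ∈
        quant '' suppBall (B.Γs n \ B.Γs (n - 1)) (B.s n) →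
      ∃ i, 1 ≤ i ∧ i ≤ I ∧ e i = p)
    (he_lex : ∀ i₁ i₂, 1 ≤ i₁ → i₁ < i₂ → i₂ ≤ I →
      (e i₁).1 < (e i₂).1 ∨ ((e i₁).1 = (e i₂).1 ∧ (e i₁).2 < (e i₂).2))
    (x : ℕ → Linf Γ)
    (hx : ∀ i, 1 ≤ i → i ≤ I → x i ∈ B.M n ∧
      restr (B.Γs n) (x i) =
        restr (B.Γs (n - 1)) (d (e i).2) +
          restr (B.Γs n \ B.Γs (n - 1)) (d (e i).2) + y (e i).1)
    (hx_range : x '' Set.Icc 1 I = B.M n \ B.D (n - 1))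
    (ψ : ℕ → Linf Γ → Linf Γ)
    (hψ_val : ∀ i, 1 ≤ i → i ≤ I → ψ i (x i) ∈ B.M n ∧
      restr (B.Γs n) (ψ i (x i)) =
        restr (B.Γs (n - 1)) (d (e i).2) +
          restr (B.Γs n \ B.Γs (n - 1)) (d (e i).2) +
          trunc (‖y (e i).1‖ - 1) (y (e i).1))
    (hψ_id : ∀ i, 1 ≤ i → i ≤ I →
      ∀ z ∈ B.D (n - 1) ∪ x '' Set.Icc 1 (i - 1), ψ i z = z)
    : ∀ z ∈ B.M n, chain ψ 0 I z ∈ B.D (n - 1) ∧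
      restr (B.Γs (n - 1)) (chain ψ 0 I z) = restr (B.Γs (n - 1)) z := by
  obtain ⟨m, rfl⟩ : ∃ m, n = m + 2 := ⟨n - 2, by omega⟩
  simp only [show m + 2 - 1 = m + 1 from rfl] at *
  have hsub : B.Γs (m+1) ⊆ B.Γs (m+2) := (B.ssubset (m+1) (by omega)).subset
  have hdisj : ∀ γ ∈ B.Γs (m+1), γ ∉ B.Γs (m+2) \ B.Γs (m+1) := fun γ h hc => hc.2 h
  -- y's are integer-valued and supported on Δ
  have hy_suppInt : ∀ j', SuppIn (B.Γs (m+2) \ B.Γs (m+1)) (y j') ∧ IntV (y j') := by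
    intro j'
    have hmem : y j' ∈ Set.range y := Set.mem_range_self j'
    rw [hyrange] at hmem
    obtain ⟨v, hv, hq⟩ := hmem
    exact ⟨by rw [← hq]; exact suppIn_quant hv, by rw [← hq]; exact intV_quant v⟩
  -- restriction computation
  have hrestr_sum : ∀ (k' : ℕ) (g : Linf Γ), SuppIn (B.Γs (m+2) \ B.Γs (m+1)) g →
      restr (B.Γs (m+1))
        (restr (B.Γs (m+1)) (d k') + restr (B.Γs (m+2) \ B.Γs (m+1)) (d k') + g)
        = restr (B.Γs (m+1)) (d k') := by
    intro k' g hg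
    rw [restr_add, restr_add, restr_restr (Set.Subset.refl _),
      restr_eq_zero_of_disjoint (suppIn_restr _ _) hdisj,
      restr_eq_zero_of_disjoint hg hdisj, add_zero, add_zero]
  -- indicator splitting
  have hsplit : ∀ v : Linf Γ, restr (B.Γs (m+2)) v
      = restr (B.Γs (m+1)) v + restr (B.Γs (m+2) \ B.Γs (m+1)) v := by
    intro v
    apply BoundedContinuousFunction.ext
    intro γ
    have hadd : (restr (B.Γs (m+1)) v + restr (B.Γs (m+2) \ B.Γs (m+1)) v) γ
        = restr (B.Γs (m+1)) v γ + restr (B.Γs (m+2) \ B.Γs (m+1)) v γ := rfl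
    rw [hadd, restr_apply, restr_apply, restr_apply]
    by_cases h1 : γ ∈ B.Γs (m+1)
    · have hno : γ ∉ B.Γs (m+2) \ B.Γs (m+1) := fun hc => hc.2 h1
      rw [Set.indicator_of_mem (hsub h1), Set.indicator_of_mem h1,
        Set.indicator_of_notMem hno, add_zero]
    · by_cases h2 : γ ∈ B.Γs (m+2)
      · have hyes : γ ∈ B.Γs (m+2) \ B.Γs (m+1) := ⟨h2, h1⟩
        rw [Set.indicator_of_mem h2, Set.indicator_of_notMem h1,
          Set.indicator_of_mem hyes, zero_add]
      · have hno : γ ∉ B.Γs (m+2) \ B.Γs (m+1) := fun hc => h2 hc.1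
        rw [Set.indicator_of_notMem h2, Set.indicator_of_notMem h1,
          Set.indicator_of_notMem hno, add_zero]
  -- THE KEY STEP
  have key : ∀ i₀, 1 ≤ i₀ → i₀ ≤ I →
      ψ i₀ (x i₀) ∈ B.D (m+1) ∪ x '' Set.Icc 1 (i₀ - 1) ∧
      restr (B.Γs (m+1)) (ψ i₀ (x i₀)) = restr (B.Γs (m+1)) (x i₀) := by
    intro i₀ hi₀1 hi₀I
    obtain ⟨hj1, hk1, hkkn, hmemE⟩ := he_mem i₀ hi₀1 hi₀I
    obtain ⟨hwM, hwrestr⟩ := hψ_val i₀ hi₀1 hi₀I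
    obtain ⟨hxM, hxrestr⟩ := hx i₀ hi₀1 hi₀I
    set j := (e i₀).1 with hj
    set k := (e i₀).2 with hk
    set g := y j with hg
    set t := trunc (‖g‖ - 1) g with ht
    obtain ⟨hgsupp, hgint⟩ := hy_suppInt j
    have hgne : g ≠ 0 := by
      intro hc
      have heq0 : y j = y 0 := by rw [hy0, ← hg]; exact hc
      have := hyinj heq0
      omega
    obtain ⟨γ₁, hnorm_eq, hγ₁1⟩ := exists_norm_attained hgint hgne
    have hnorm1 : (1:ℝ) ≤ ‖g‖ := hnorm_eq ▸ hγ₁1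
    have hnormInt : ∃ mz : ℤ, ‖g‖ = mz := by
      obtain ⟨mz, hmz⟩ := hgint γ₁
      refine ⟨|mz|, ?_⟩
      rw [hnorm_eq, hmz]
      exact_mod_cast rfl
    have htsupp : SuppIn (B.Γs (m+2) \ B.Γs (m+1)) t := by
      intro γ hγ
      rw [ht, trunc_apply, hgsupp γ hγ, truncFun_zero]
    have htint : IntV t := by
      intro γ
      obtain ⟨mz, hmz⟩ := hnormInt
      rw [ht, trunc_apply]
      exact truncFun_isInt ⟨mz - 1, by rw [hmz]; push_cast; ring⟩ (hgint γ)
    have htnorm : ‖t‖ ≤ ‖g‖ - 1 := by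
      rw [ht, BoundedContinuousFunction.norm_le (by linarith)]
      intro γ
      rw [Real.norm_eq_abs, trunc_apply]
      exact abs_truncFun_le' (by linarith) _
    have htrange : t ∈ Set.range y := by
      rw [hyrange]
      exact ⟨t, htsupp, quant_eq_self htint⟩
    obtain ⟨j'', hj''⟩ := htrange
    have hj''lt : j'' < j := by
      by_contra hc
      push_neg at hc
      have hmono := hymono j j'' hc
      rw [hj'', ← hg] at hmono
      linarith
    have hdkD : d k ∈ B.D (m+1) := by
      have himg : d k ∈ d '' Set.Icc 1 kn := Set.mem_image_of_mem d ⟨hk1, hkkn⟩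
      rwa [hd_range] at himg
    have hdkint : IntV (d k) := B.D_intV (m+1) hdkD
    obtain ⟨u, ⟨husupp, hunorm⟩, hueq⟩ := hmemE
    have hDk_g : ∀ γ ∈ B.Γs (m+2) \ B.Γs (m+1), |d k γ + g γ| ≤ B.s (m+2) := by
      intro γ hγ
      have h0 : (restr (B.Γs (m+2) \ B.Γs (m+1)) (d k) + g) γ = quant u γ := by
        rw [hueq]
      have h1 : restr (B.Γs (m+2) \ B.Γs (m+1)) (d k) γ + g γ = quant u γ := h0
      rw [restr_apply, Set.indicator_of_mem hγ, quant_apply] at h1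
      rw [h1]
      exact le_trans (abs_ent_le _) (le_trans (abs_apply_le_norm u γ) hunorm)
    -- the restriction identity
    have hrw : restr (B.Γs (m+1)) (ψ i₀ (x i₀)) = restr (B.Γs (m+1)) (d k) := by
      have h1 := (restr_restr hsub (ψ i₀ (x i₀))).symm
      rw [h1, hwrestr, hrestr_sum k t htsupp]
    have hrx : restr (B.Γs (m+1)) (x i₀) = restr (B.Γs (m+1)) (d k) := by
      have h1 := (restr_restr hsub (x i₀)).symm
      rw [h1, hxrestr, hrestr_sum k g hgsupp]
    refine ⟨?_, hrw.trans hrx.symm⟩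
    -- membership
    by_cases hwD : ψ i₀ (x i₀) ∈ B.D (m+1)
    · exact Set.mem_union_left _ hwD
    have hwnotM : ψ i₀ (x i₀) ∉ B.M (m+1) := fun hc => hwD (Set.mem_union_left _ hc)
    obtain ⟨hQw0, hwnotim0⟩ :=
      B.Q_of_Mnew (m+1) (show ψ i₀ (x i₀) ∈ B.M (m+1+1) from hwM) hwnotM
    have hQw : ψ i₀ (x i₀) = quant (B.i (m+2) (restr (B.Γs (m+2)) (ψ i₀ (x i₀)))) := hQw0
    have hwnotim : restr (B.Γs (m+2)) (ψ i₀ (x i₀)) ∉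
        restr (B.Γs (m+2)) '' B.M (m+1) := hwnotim0
    rcases Nat.eq_zero_or_pos j'' with hj''0 | hj''pos
    · -- truncation is zero: ψ i₀ (x i₀) should be d k, contradiction with hwD
      exfalso
      have ht0 : t = 0 := by rw [← hj'', hj''0, hy0]
      have hreq : restr (B.Γs (m+2)) (ψ i₀ (x i₀)) = restr (B.Γs (m+2)) (d k) := by
        rw [hwrestr, ht0, add_zero, hsplit (d k)]
      rcases hdkD with hdkM | hdkC
      · exact hwnotim ⟨d k, hdkM, hreq.symm⟩
      · have hQd0 := B.Q_of_C (m+1) hdkC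
        have hQd : d k = quant (B.i (m+2) (restr (B.Γs (m+2)) (d k))) := hQd0
        have : ψ i₀ (x i₀) = d k := by rw [hQw, hreq, ← hQd]
        exact hwD (by rw [this]; exact Set.mem_union_right _ hdkC)
    · -- (j'', k) is a legitimate pair in E(n)
      have hmem' : restr (B.Γs (m+2) \ B.Γs (m+1)) (d k) + y j'' ∈
          quant '' suppBall (B.Γs (m+2) \ B.Γs (m+1)) (B.s (m+2)) := by
        have hintH : IntV (restr (B.Γs (m+2) \ B.Γs (m+1)) (d k) + y j'') :=
          intV_add (intV_restr _ hdkint) (by rw [hj'']; exact htint)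
        have hsuppH : SuppIn (B.Γs (m+2) \ B.Γs (m+1))
            (restr (B.Γs (m+2) \ B.Γs (m+1)) (d k) + y j'') :=
          suppIn_add (suppIn_restr _ _) (by rw [hj'']; exact htsupp)
        have hnormH : ‖restr (B.Γs (m+2) \ B.Γs (m+1)) (d k) + y j''‖ ≤ B.s (m+2) := by
          rw [BoundedContinuousFunction.norm_le (B.s_nonneg _)]
          intro γ
          rw [Real.norm_eq_abs]
          by_cases hγ : γ ∈ B.Γs (m+2) \ B.Γs (m+1)
          · have happ : (restr (B.Γs (m+2) \ B.Γs (m+1)) (d k) + y j'') γ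
                = restr (B.Γs (m+2) \ B.Γs (m+1)) (d k) γ + y j'' γ := rfl
            rw [happ, restr_apply, Set.indicator_of_mem hγ, hj'', ht, trunc_apply]
            have hb1 : |d k γ| ≤ B.s (m+2) := B.D_bound m hdkD γ hγ.1
            have hb2 : |d k γ + g γ| ≤ B.s (m+2) := hDk_g γ hγ
            exact le_trans (abs_add_truncFun_le (by linarith) _ _) (max_le hb1 hb2)
          · rw [hsuppH γ hγ, abs_zero]
            exact B.s_nonneg _
        exact ⟨_, ⟨hsuppH, hnormH⟩, quant_eq_self hintH⟩
      obtain ⟨i'', hi''1, hi''I, hei''⟩ := he_surj (j'', k) hj''pos hk1 hkkn hmem'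
      have hfst : (e i'').1 = j'' := by rw [hei'']
      have hsnd : (e i'').2 = k := by rw [hei'']
      have hi''lt : i'' < i₀ := by
        by_contra hc
        push_neg at hc
        rcases eq_or_lt_of_le hc with heq | hlt
        · have : j = j'' := by rw [hj, heq, hfst]
          omega
        · rcases he_lex i₀ i'' hi₀1 hlt hi''I with h | h
          · rw [← hj, hfst] at h
            omega
          · obtain ⟨h1, _⟩ := h
            rw [← hj, hfst] at h1
            omega
      have hxi'' : x i'' ∈ B.M (m+2) \ B.D (m+1) := by
        rw [← hx_range]
        exact Set.mem_image_of_mem x ⟨hi''1, hi''I⟩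
      obtain ⟨_, hx''restr⟩ := hx i'' hi''1 hi''I
      have hx''notM : x i'' ∉ B.M (m+1) := fun hc => hxi''.2 (Set.mem_union_left _ hc)
      obtain ⟨hQx0, _⟩ :=
        B.Q_of_Mnew (m+1) (show x i'' ∈ B.M (m+1+1) from hxi''.1) hx''notM
      have hQx : x i'' = quant (B.i (m+2) (restr (B.Γs (m+2)) (x i''))) := hQx0
      rw [hfst, hsnd, hj''] at hx''restr
      have hre : restr (B.Γs (m+2)) (ψ i₀ (x i₀)) = restr (B.Γs (m+2)) (x i'') :=
        hwrestr.trans hx''restr.symm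
      have hfin : ψ i₀ (x i₀) = x i'' := by rw [hQw, hre, ← hQx]
      exact Set.mem_union_right _ ⟨i'', ⟨hi''1, by omega⟩, hfin.symm⟩
  -- chain unfolding
  have chain_succ : ∀ N : ℕ, chain ψ 0 (N+1) = chain ψ 0 N ∘ ψ (N+1) := by
    intro N
    show (Nat.rec id (fun kk ih => ih ∘ ψ (0 + kk + 1)) N : Linf Γ → Linf Γ)
        ∘ ψ (0 + N + 1) = _
    rw [Nat.zero_add]
    rfl
  -- main induction
  have main : ∀ N, N ≤ I → ∀ z, z ∈ B.D (m+1) ∪ x '' Set.Icc 1 N →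
      chain ψ 0 N z ∈ B.D (m+1) ∧
      restr (B.Γs (m+1)) (chain ψ 0 N z) = restr (B.Γs (m+1)) z := by
    intro N
    induction N with
    | zero =>
      intro _ z hz
      rcases hz with hz | hz
      · exact ⟨hz, rfl⟩
      · obtain ⟨i₀, ⟨h1, h0⟩, _⟩ := hz
        omega
    | succ N ih =>
      intro hNI z hz
      rw [chain_succ N]
      simp only [Function.comp_apply]
      by_cases hz' : z ∈ B.D (m+1) ∪ x '' Set.Icc 1 N
      · rw [hψ_id (N+1) (by omega) hNI z hz']
        exact ih (by omega) z hz'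
      · have hzx : z = x (N+1) := by
          rcases hz with hz | hz
          · exact absurd (Set.mem_union_left _ hz) hz'
          · obtain ⟨i₀, ⟨hi₀1, hi₀le⟩, rfl⟩ := hz
            rcases Nat.lt_or_ge i₀ (N+1) with h | h
            · have himg : x i₀ ∈ x '' Set.Icc 1 N :=
                Set.mem_image_of_mem x ⟨hi₀1, by omega⟩
              exact absurd (Set.mem_union_right _ himg) hz'
            · congr 1
              omega
        rw [hzx]
        obtain ⟨hmem, hre⟩ := key (N+1) (by omega) hNI
        obtain ⟨hc1, hc2⟩ := ih (by omega) _ hmem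
        exact ⟨hc1, hc2.trans hre⟩
  -- conclusion
  intro z hz
  by_cases hzD : z ∈ B.D (m+1)
  · exact main I le_rfl z (Set.mem_union_left _ hzD)
  · have hdiff : z ∈ B.M (m+2) \ B.D (m+1) := ⟨hz, hzD⟩
    rw [← hx_range] at hdiff
    exact main I le_rfl z (Set.mem_union_right _ hdiff)
end
end

section
/- For every $i\in\{0,\dots,i(n)-1\}$, the retraction $\Psi_{n,i}:M_n\to D_{n-1,i}$ is $(3\lambda+2)(3\lambda^2+6\lambda+11)$-Lipschitz. -/
open Set

noncomputable section

variable {Γ : Type*} [TopologicalSpace Γ] [DiscreteTopology Γ]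

namespace BDAux

open BoundedContinuousFunction

variable {Γ : Type*} [TopologicalSpace Γ] [DiscreteTopology Γ]

lemma quant_apply (x : Linf Γ) (γ : Γ) : quant x γ = ent (x γ) := rfl

lemma trunc_apply (s : ℝ) (x : Linf Γ) (γ : Γ) : trunc s x γ = truncFun s (x γ) := rfl

lemma restr_apply_mem {S : Set Γ} {γ : Γ} (h : γ ∈ S) (x : Linf Γ) :
    restr S x γ = x γ := by
  show S.indicator x γ = x γ
  rw [Set.indicator_of_mem h]

lemma restr_apply_not_mem {S : Set Γ} {γ : Γ} (h : γ ∉ S) (x : Linf Γ) :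
    restr S x γ = 0 := by
  show S.indicator x γ = 0
  rw [Set.indicator_of_notMem h]

lemma ent_zero : ent 0 = 0 := by simp [ent]

lemma abs_ent_sub_le (r : ℝ) : |ent r - r| ≤ 1 := by
  rcases lt_trichotomy r 0 with h | h | h
  · rw [ent, Real.sign_of_neg h, abs_of_neg h]
    have h1 := Int.floor_le (-r)
    have h2 := Int.lt_floor_add_one (-r)
    rw [abs_le]; constructor <;> nlinarith
  · simp [h, ent_zero]
  · rw [ent, Real.sign_of_pos h, abs_of_pos h]
    have h1 := Int.floor_le r
    have h2 := Int.lt_floor_add_one r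
    rw [abs_le]; constructor <;> nlinarith

lemma ent_intCast (m : ℤ) : ent (m : ℝ) = m := by
  rcases lt_trichotomy ((m:ℝ)) 0 with h | h | h
  · rw [ent, Real.sign_of_neg h, abs_of_neg h, ← Int.cast_neg, Int.floor_intCast]
    push_cast; ring
  · rw [h, ent_zero]
  · rw [ent, Real.sign_of_pos h, abs_of_pos h, Int.floor_intCast, one_mul]

lemma ent_exists_int (r : ℝ) : ∃ m : ℤ, ent r = (m:ℝ) := by
  rcases lt_trichotomy r 0 with h | h | h
  · exact ⟨-⌊-r⌋, by rw [ent, Real.sign_of_neg h, abs_of_neg h]; push_cast; ring⟩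
  · exact ⟨0, by simp [h, ent_zero]⟩
  · exact ⟨⌊r⌋, by rw [ent, Real.sign_of_pos h, abs_of_pos h, one_mul]⟩

/-- Integer-valued bounded functions. -/
def IsInt (f : Linf Γ) : Prop := ∀ γ, ∃ m : ℤ, f γ = (m:ℝ)

lemma isInt_quant (x : Linf Γ) : IsInt (quant x) := fun γ => ent_exists_int (x γ)

lemma isInt_zero : IsInt (0 : Linf Γ) := fun _ => ⟨0, by simp⟩

lemma quant_eq_self {x : Linf Γ} (h : IsInt x) : quant x = x := by
  ext γ; obtain ⟨m, hm⟩ := h γ; rw [quant_apply, hm, ent_intCast]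

lemma isInt_restr {x : Linf Γ} (h : IsInt x) (S : Set Γ) : IsInt (restr S x) := by
  intro γ; by_cases hγ : γ ∈ S
  · rw [restr_apply_mem hγ]; exact h γ
  · exact ⟨0, by rw [restr_apply_not_mem hγ]; simp⟩

lemma isInt_add {x y : Linf Γ} (hx : IsInt x) (hy : IsInt y) : IsInt (x + y) := by
  intro γ
  obtain ⟨m, hm⟩ := hx γ; obtain ⟨m', hm'⟩ := hy γ
  refine ⟨m + m', ?_⟩
  have : (x + y) γ = x γ + y γ := rfl
  rw [this, hm, hm']; push_cast; ring

lemma bcf_abs_le_norm (f : Linf Γ) (γ : Γ) : |f γ| ≤ ‖f‖ := by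
  have := f.norm_coe_le_norm γ; rwa [Real.norm_eq_abs] at this

lemma bcf_norm_le {f : Linf Γ} {C : ℝ} (hC : 0 ≤ C) (h : ∀ γ, |f γ| ≤ C) : ‖f‖ ≤ C :=
  (BoundedContinuousFunction.norm_le hC).mpr fun γ => by
    rw [Real.norm_eq_abs]; exact h γ

lemma bcf_sub_apply (f g : Linf Γ) (γ : Γ) : (f - g) γ = f γ - g γ := rfl

lemma bcf_add_apply (f g : Linf Γ) (γ : Γ) : (f + g) γ = f γ + g γ := rfl

lemma norm_quant_sub_le (x : Linf Γ) : ‖quant x - x‖ ≤ 1 :=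
  bcf_norm_le one_pos.le fun γ => by
    rw [bcf_sub_apply, quant_apply]; exact abs_ent_sub_le (x γ)

lemma norm_quant_le (x : Linf Γ) : ‖quant x‖ ≤ ‖x‖ :=
  bcf_norm_le (norm_nonneg x) fun γ => (abs_ent_le (x γ)).trans (bcf_abs_le_norm x γ)

lemma one_le_norm_sub {z w : Linf Γ} (hz : IsInt z) (hw : IsInt w) (hne : z ≠ w) :
    (1:ℝ) ≤ ‖z - w‖ := by
  have hex : ∃ γ, z γ ≠ w γ := by
    by_contra h; push_neg at h; exact hne (BoundedContinuousFunction.ext h)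
  obtain ⟨γ, hγ⟩ := hex
  obtain ⟨m, hm⟩ := hz γ; obtain ⟨m', hm'⟩ := hw γ
  have hmm : m ≠ m' := by rintro rfl; exact hγ (hm.trans hm'.symm)
  have h1 : (1:ℝ) ≤ |z γ - w γ| := by
    rw [hm, hm', ← Int.cast_sub, ← Int.cast_abs]
    exact_mod_cast Int.one_le_abs (sub_ne_zero.mpr hmm)
  calc (1:ℝ) ≤ |z γ - w γ| := h1
    _ = |(z - w) γ| := by rw [bcf_sub_apply]
    _ ≤ ‖z - w‖ := bcf_abs_le_norm _ γ

/-! ### truncFun lemmas -/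

lemma truncFun_eq_clamp {s : ℝ} (hs : 0 ≤ s) (t : ℝ) :
    truncFun s t = max (-s) (min s t) := by
  unfold truncFun
  split_ifs with h
  · rw [abs_le] at h
    rw [min_eq_right h.2, max_eq_right h.1]
  · push_neg at h
    rcases lt_trichotomy t 0 with ht | ht | ht
    · have habs : |t| = -t := abs_of_neg ht
      rw [habs] at h ⊢
      have ht' : t < -s := by linarith
      rw [min_eq_right (by linarith : t ≤ s), max_eq_left (le_of_lt ht')]
      rw [div_neg, mul_div_assoc, div_self (by linarith : t ≠ 0), mul_one]
    · subst ht; simp at h; linarith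
    · have habs : |t| = t := abs_of_pos ht
      rw [habs] at h ⊢
      rw [min_eq_left (le_of_lt h), max_eq_right (by linarith : -s ≤ s)]
      rw [mul_div_assoc, div_self (ne_of_gt ht), mul_one]

lemma abs_truncFun_diff {s s' a b : ℝ} (hs : 0 ≤ s) (hs' : 0 ≤ s') :
    |truncFun s a - truncFun s' b| ≤ |s - s'| + |a - b| := by
  rw [truncFun_eq_clamp hs, truncFun_eq_clamp hs']
  have h1 : |max (-s) (min s a) - max (-s') (min s' b)| ≤
      max |(-s) - (-s')| |min s a - min s' b| := abs_max_sub_max_le_max _ _ _ _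
  have h2 : |min s a - min s' b| ≤ max |s - s'| |a - b| := abs_min_sub_min_le_max _ _ _ _
  have h3 : |(-s) - (-s')| = |s - s'| := by rw [show (-s) - (-s') = -(s - s') by ring, abs_neg]
  refine h1.trans ?_
  rw [h3]
  exact max_le (le_add_of_nonneg_right (abs_nonneg _))
    (h2.trans (max_le (le_add_of_nonneg_right (abs_nonneg _))
      (le_add_of_nonneg_left (abs_nonneg _))))

lemma truncFun_of_abs_le {s t : ℝ} (h : |t| ≤ s) : truncFun s t = t := if_pos h

lemma truncFun_zero (s : ℝ) : truncFun s 0 = 0 := by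
  unfold truncFun; split_ifs <;> simp

lemma abs_truncFun_le_level {s : ℝ} (hs : 0 ≤ s) (t : ℝ) : |truncFun s t| ≤ s := by
  rw [truncFun_eq_clamp hs]
  rw [abs_le]
  constructor
  · exact le_max_left _ _
  · exact max_le (neg_le_self hs) (min_le_left _ _)

lemma abs_truncFun_le_self {s : ℝ} (hs : 0 ≤ s) (t : ℝ) : |truncFun s t| ≤ |t| := by
  unfold truncFun
  split_ifs with h
  · exact le_refl _
  · push_neg at h
    have ht : t ≠ 0 := by rintro rfl; simp at h; linarith
    have : abs (s * t / |t|) = s := by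
      rw [abs_div, abs_mul, abs_abs, mul_div_assoc, div_self (abs_ne_zero.mpr ht), mul_one,
        abs_of_nonneg hs]
    rw [this]; linarith

lemma truncFun_truncFun {c h : ℝ} (hc : 0 ≤ c) (hch : c ≤ h) (t : ℝ) :
    truncFun c (truncFun h t) = truncFun c t := by
  have hh : 0 ≤ h := hc.trans hch
  rw [truncFun_eq_clamp hh, truncFun_eq_clamp hc, truncFun_eq_clamp hc]
  rw [min_max_distrib_left]
  rw [min_eq_right (by linarith : -h ≤ c)]
  rw [← min_assoc, min_eq_left hch]
  rw [← max_assoc, max_eq_left (by linarith : -h ≤ -c)]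

lemma abs_truncFun_eq {c t : ℝ} (hc : 0 ≤ c) (h : c ≤ |t|) : |truncFun c t| = c := by
  unfold truncFun
  split_ifs with h'
  · exact le_antisymm h' h
  · push_neg at h'
    have ht : t ≠ 0 := by rintro rfl; simp at h'; linarith
    rw [abs_div, abs_mul, abs_abs, mul_div_assoc, div_self (abs_ne_zero.mpr ht), mul_one,
      abs_of_nonneg hc]

lemma exists_int_truncFun (c : ℕ) (m : ℤ) : ∃ m' : ℤ, truncFun (c:ℝ) (m:ℝ) = (m':ℝ) := by
  unfold truncFun
  split_ifs with h
  · exact ⟨m, rfl⟩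
  · push_neg at h
    rcases lt_trichotomy ((m:ℝ)) 0 with hm | hm | hm
    · refine ⟨-(c:ℤ), ?_⟩
      rw [abs_of_neg hm, div_neg, mul_div_assoc, div_self (by linarith : (m:ℝ) ≠ 0), mul_one]
      push_cast; ring
    · exfalso; rw [hm, abs_zero] at h; exact absurd h (not_lt.mpr (Nat.cast_nonneg c))
    · refine ⟨(c:ℤ), ?_⟩
      rw [abs_of_pos hm, mul_div_assoc, div_self (ne_of_gt hm), mul_one]
      push_cast; ring

lemma abs_add_truncFun_le {s d t c : ℝ} (hc : 0 ≤ c) (hd : |d| ≤ s) (hdt : |d + t| ≤ s) :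
    |d + truncFun c t| ≤ s := by
  unfold truncFun
  split_ifs with h
  · exact hdt
  · push_neg at h
    have ht : t ≠ 0 := by rintro rfl; simp at h; linarith
    have htpos : 0 < |t| := abs_pos.mpr ht
    set α := c / |t| with hα
    have hα0 : 0 ≤ α := by positivity
    have hα1 : α ≤ 1 := by rw [hα, div_le_one htpos]; linarith
    have heq : c * t / |t| = α * t := by rw [hα]; ring
    rw [heq]
    have hkey : d + α * t = (1 - α) * d + α * (d + t) := by ring
    rw [hkey]
    calc |(1 - α) * d + α * (d + t)| ≤ |(1 - α) * d| + |α * (d + t)| := abs_add_le _ _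
      _ = (1 - α) * |d| + α * |d + t| := by
          rw [abs_mul, abs_mul, abs_of_nonneg (by linarith : (0:ℝ) ≤ 1 - α), abs_of_nonneg hα0]
      _ ≤ (1 - α) * s + α * s := by
          have := mul_le_mul_of_nonneg_left hd (by linarith : (0:ℝ) ≤ 1 - α)
          have := mul_le_mul_of_nonneg_left hdt hα0
          nlinarith
      _ = s := by ring

end BDAux

namespace BDAux

variable {Γ : Type*} [TopologicalSpace Γ] [DiscreteTopology Γ]

lemma restr_sub (S : Set Γ) (x y : Linf Γ) :
    restr S (x - y) = restr S x - restr S y := by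
  ext γ
  rw [bcf_sub_apply]
  by_cases h : γ ∈ S
  · rw [restr_apply_mem h, restr_apply_mem h, restr_apply_mem h, bcf_sub_apply]
  · rw [restr_apply_not_mem h, restr_apply_not_mem h, restr_apply_not_mem h, sub_zero]

lemma restr_restr {S T : Set Γ} (h : S ⊆ T) (x : Linf Γ) :
    restr S (restr T x) = restr S x := by
  ext γ
  by_cases hγ : γ ∈ S
  · rw [restr_apply_mem hγ, restr_apply_mem hγ, restr_apply_mem (h hγ)]
  · rw [restr_apply_not_mem hγ, restr_apply_not_mem hγ]

lemma quant_restr (S : Set Γ) (x : Linf Γ) :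
    restr S (quant x) = quant (restr S x) := by
  ext γ
  by_cases hγ : γ ∈ S
  · rw [restr_apply_mem hγ, quant_apply, quant_apply, restr_apply_mem hγ]
  · rw [restr_apply_not_mem hγ, quant_apply, restr_apply_not_mem hγ, ent_zero]

lemma norm_restr_le (S : Set Γ) (x : Linf Γ) : ‖restr S x‖ ≤ ‖x‖ :=
  bcf_norm_le (norm_nonneg x) fun γ => by
    by_cases h : γ ∈ S
    · rw [restr_apply_mem h]; exact bcf_abs_le_norm x γ
    · rw [restr_apply_not_mem h, abs_zero]; exact norm_nonneg x

lemma restr_split {S T : Set Γ} (h : S ⊆ T) (x : Linf Γ) :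
    restr T x = restr S x + restr (T \ S) x := by
  ext γ
  rw [bcf_add_apply]
  by_cases hS : γ ∈ S
  · rw [restr_apply_mem (h hS), restr_apply_mem hS,
      restr_apply_not_mem (fun hd : γ ∈ T \ S => hd.2 hS), add_zero]
  · by_cases hT : γ ∈ T
    · have hTS : γ ∈ T \ S := ⟨hT, hS⟩
      rw [restr_apply_mem hT, restr_apply_not_mem hS, restr_apply_mem hTS, zero_add]
    · rw [restr_apply_not_mem hT, restr_apply_not_mem hS,
        restr_apply_not_mem (fun hd : γ ∈ T \ S => hT hd.1), add_zero]

/-! ### trunc (BCF) lemmas -/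

lemma trunc_eq_self_bcf {c : ℝ} {f : Linf Γ} (h : ∀ γ, |f γ| ≤ c) : trunc c f = f := by
  ext γ; rw [trunc_apply, truncFun_of_abs_le (h γ)]

lemma trunc_trunc_bcf {c h : ℝ} (hc : 0 ≤ c) (hch : c ≤ h) (f : Linf Γ) :
    trunc c (trunc h f) = trunc c f := by
  ext γ; rw [trunc_apply, trunc_apply, trunc_apply, truncFun_truncFun hc hch]

lemma trunc_zero_fun (c : ℝ) : trunc c (0 : Linf Γ) = 0 := by
  ext γ
  rw [trunc_apply]
  show truncFun c ((0 : Linf Γ) γ) = (0 : Linf Γ) γ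
  show truncFun c 0 = (0:ℝ)
  rw [truncFun_zero]

lemma isInt_trunc {f : Linf Γ} (hf : IsInt f) (c : ℕ) : IsInt (trunc (c:ℝ) f) := by
  intro γ
  obtain ⟨m, hm⟩ := hf γ
  rw [trunc_apply, hm]
  exact exists_int_truncFun c m

/-! ### BD lemmas -/

variable (B : BD Γ)

lemma one_le_lamR : (1:ℝ) ≤ (B.lam : ℝ) := by exact_mod_cast B.one_le_lam

lemma s_nonneg (n : ℕ) : 0 ≤ B.s n := pow_nonneg (Nat.cast_nonneg _) n

lemma s_mono {m n : ℕ} (h : m ≤ n) : B.s m ≤ B.s n :=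
  pow_le_pow_right₀ (one_le_lamR B) h

lemma norm_i_apply_le {m : ℕ} (hm : 1 ≤ m) (x : Linf Γ) :
    ‖B.i m x‖ ≤ (B.lam : ℝ) * ‖x‖ :=
  ((B.i m).le_opNorm x).trans (mul_le_mul_of_nonneg_right (B.norm_i_le m hm) (norm_nonneg x))

lemma mem_M_struct : ∀ N, ∀ ζ ∈ B.M N, ∃ m u, 1 ≤ m ∧ m ≤ N ∧
    u ∈ quant '' suppBall (B.Γs m) (B.s m) ∧ ζ = quant (B.i m u) := by
  intro N
  induction N with
  | zero => intro ζ hζ; exact absurd hζ (by simp [BD.M])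
  | succ N ih =>
    intro ζ hζ
    rcases hζ with hζ | ⟨u, hu, hu2⟩
    · obtain ⟨m, u, h1, h2, h3, h4⟩ := ih ζ hζ
      exact ⟨m, u, h1, h2.trans (Nat.le_succ N), h3, h4⟩
    · exact ⟨N+1, u, Nat.succ_le_succ (Nat.zero_le N), le_refl _, hu.1, hu2.symm⟩

lemma M_isInt {N : ℕ} {ζ : Linf Γ} (h : ζ ∈ B.M N) : IsInt ζ := by
  obtain ⟨m, u, _, _, _, rfl⟩ := mem_M_struct B N ζ h; exact isInt_quant _

lemma M_mono {m n : ℕ} (h : m ≤ n) : B.M m ⊆ B.M n := by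
  induction n with
  | zero => rw [Nat.le_zero.mp h]
  | succ n ih =>
    rcases Nat.lt_or_ge m (n+1) with h' | h'
    · exact (ih (by omega)).trans (fun ζ hζ => Or.inl hζ)
    · have : m = n + 1 := by omega
      rw [this]

lemma D_isInt {N : ℕ} {dd : Linf Γ} (hd : dd ∈ B.D N) : IsInt dd := by
  rcases hd with hd | hd
  · exact M_isInt B hd
  · obtain ⟨zz, _, hz2⟩ := hd
    rw [← hz2]; exact isInt_quant _

lemma mem_quant_ball {S : Set Γ} {s : ℝ} {u : Linf Γ}
    (hu : u ∈ quant '' suppBall S s) :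
    IsInt u ∧ (∀ γ ∉ S, u γ = 0) ∧ ‖u‖ ≤ s ∧ quant u = u := by
  obtain ⟨u₀, ⟨hsupp, hnorm⟩, rfl⟩ := hu
  exact ⟨isInt_quant u₀, fun γ hγ => by rw [quant_apply, hsupp γ hγ, ent_zero],
    (norm_quant_le u₀).trans hnorm, quant_eq_self (isInt_quant u₀)⟩

lemma quant_ball_self {S : Set Γ} {s : ℝ} {u : Linf Γ} (hint : IsInt u)
    (hsupp : ∀ γ ∉ S, u γ = 0) (hnorm : ‖u‖ ≤ s) :
    u ∈ quant '' suppBall S s :=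
  ⟨u, ⟨hsupp, hnorm⟩, quant_eq_self hint⟩

lemma restr_quant_i {N : ℕ} (hN : 1 ≤ N) {v : Linf Γ} (hv : IsInt v)
    (hsupp : ∀ γ ∉ B.Γs N, v γ = 0) :
    restr (B.Γs N) (quant (B.i N v)) = v := by
  ext γ
  by_cases hγ : γ ∈ B.Γs N
  · rw [restr_apply_mem hγ, quant_apply, B.extension N hN v γ hγ]
    obtain ⟨m, hm⟩ := hv γ; rw [hm, ent_intCast]
  · rw [restr_apply_not_mem hγ, hsupp γ hγ]

lemma i_restr_eq {m n : ℕ} (hm : 1 ≤ m) (hmn : m ≤ n) (u : Linf Γ) :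
    B.i n (restr (B.Γs n) (B.i m u)) = B.i m u := by
  rcases lt_or_eq_of_le hmn with h | h
  · exact B.compatible m n hm h u
  · subst h
    have hres : restr (B.Γs m) (B.i m u) = restr (B.Γs m) u := by
      ext γ
      by_cases hγ : γ ∈ B.Γs m
      · rw [restr_apply_mem hγ, restr_apply_mem hγ, B.extension m hm u γ hγ]
      · rw [restr_apply_not_mem hγ, restr_apply_not_mem hγ]
    rw [hres, B.factor m hm u]

lemma restr_inj_M : ∀ N, ∀ z ∈ B.M N, ∀ z' ∈ B.M N,
    restr (B.Γs N) z = restr (B.Γs N) z' → z = z' := by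
  intro N
  induction N with
  | zero => intro z hz; exact absurd hz (by simp [BD.M])
  | succ N ih =>
    intro z hz z' hz' heq
    have hnew : ∀ w, w ∈ quant '' suppBall (B.Γs (N+1)) (B.s (N+1)) →
        restr (B.Γs (N+1)) (quant (B.i (N+1) w)) = w := fun w hw => by
      obtain ⟨hint, hsupp, _, _⟩ := mem_quant_ball hw
      exact restr_quant_i B (Nat.succ_le_succ (Nat.zero_le N)) hint hsupp
    rcases hz with hz | ⟨u, hu, hu2⟩
    · rcases hz' with hz' | ⟨u', hu', hu2'⟩
      · -- both old
        have hN : 1 ≤ N := by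
          rcases Nat.eq_zero_or_pos N with rfl | h
          · exact absurd hz (by simp [BD.M])
          · exact h
        have hsub : B.Γs N ⊆ B.Γs (N+1) := (B.ssubset N hN).subset
        refine ih z hz z' hz' ?_
        calc restr (B.Γs N) z = restr (B.Γs N) (restr (B.Γs (N+1)) z) :=
              (restr_restr hsub _).symm
          _ = restr (B.Γs N) (restr (B.Γs (N+1)) z') := by rw [heq]
          _ = restr (B.Γs N) z' := restr_restr hsub _
      · -- z old, z' new
        replace hu2' : quant (B.i (N+1) u') = z' := hu2'
        exfalso
        apply hu'.2
        refine ⟨z, hz, ?_⟩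
        rw [heq, ← hu2', hnew u' hu'.1]
    · replace hu2 : quant (B.i (N+1) u) = z := hu2
      rcases hz' with hz' | ⟨u', hu', hu2'⟩
      · -- z new, z' old
        exfalso
        apply hu.2
        refine ⟨z', hz', ?_⟩
        rw [← heq, ← hu2, hnew u hu.1]
      · -- both new
        replace hu2' : quant (B.i (N+1) u') = z' := hu2'
        rw [← hu2, ← hu2']
        have h1 : u = u' := by
          rw [← hnew u hu.1, ← hnew u' hu'.1, hu2, hu2', heq]
        rw [h1]

lemma near_M {n : ℕ} (hn : 1 ≤ n) {ζ : Linf Γ} (hζ : ζ ∈ B.M n) :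
    ‖ζ - B.i n (restr (B.Γs n) ζ)‖ ≤ (B.lam : ℝ) + 1 := by
  obtain ⟨m, u, hm1, hmn, hu, rfl⟩ := mem_M_struct B n ζ hζ
  have hrq : restr (B.Γs n) (quant (B.i m u)) = quant (restr (B.Γs n) (B.i m u)) :=
    quant_restr _ _
  have hiw : B.i n (restr (B.Γs n) (B.i m u)) = B.i m u := i_restr_eq B hm1 hmn u
  have key : quant (B.i m u) - B.i n (restr (B.Γs n) (quant (B.i m u))) =
      (quant (B.i m u) - B.i m u) -
        B.i n (quant (restr (B.Γs n) (B.i m u)) - restr (B.Γs n) (B.i m u)) := by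
    rw [hrq, map_sub, hiw]; abel
  rw [key]
  have h2 : ‖B.i n (quant (restr (B.Γs n) (B.i m u)) - restr (B.Γs n) (B.i m u))‖ ≤
      (B.lam : ℝ) * 1 := by
    refine (norm_i_apply_le B hn _).trans ?_
    exact mul_le_mul_of_nonneg_left (norm_quant_sub_le _) (by positivity)
  calc ‖_ - _‖ ≤ ‖quant (B.i m u) - B.i m u‖ + ‖_‖ := norm_sub_le _ _
    _ ≤ 1 + (B.lam:ℝ) * 1 := add_le_add (norm_quant_sub_le _) h2
    _ = (B.lam:ℝ) + 1 := by ring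

lemma sep_M {n : ℕ} (hn : 1 ≤ n) {z w : Linf Γ} (hz : z ∈ B.M n) (hw : w ∈ B.M n) :
    ‖z - w‖ ≤ (B.lam:ℝ) * ‖restr (B.Γs n) z - restr (B.Γs n) w‖ + (2*(B.lam:ℝ) + 2) := by
  have h1 := near_M B hn hz
  have h2 := near_M B hn hw
  have h3 : ‖B.i n (restr (B.Γs n) z) - B.i n (restr (B.Γs n) w)‖ ≤
      (B.lam:ℝ) * ‖restr (B.Γs n) z - restr (B.Γs n) w‖ := by
    rw [← map_sub]; exact norm_i_apply_le B hn _
  have key : z - w = (z - B.i n (restr (B.Γs n) z)) +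
      (B.i n (restr (B.Γs n) z) - B.i n (restr (B.Γs n) w)) +
      (B.i n (restr (B.Γs n) w) - w) := by abel
  rw [key]
  calc ‖_ + _ + _‖ ≤ ‖_‖ + ‖_‖ + ‖_‖ := norm_add₃_le
    _ ≤ ((B.lam:ℝ) + 1) + (B.lam:ℝ) * ‖restr (B.Γs n) z - restr (B.Γs n) w‖ + ((B.lam:ℝ) + 1) := by
        refine add_le_add (add_le_add h1 h3) ?_
        rw [norm_sub_rev]; exact h2
    _ = (B.lam:ℝ) * ‖restr (B.Γs n) z - restr (B.Γs n) w‖ + (2*(B.lam:ℝ) + 2) := by ring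

end BDAux

namespace BDAux

variable {Γ : Type*} [TopologicalSpace Γ] [DiscreteTopology Γ]
variable (B : BD Γ)

/-- The auxiliary Lipschitz map through which all restrictions of elements of
`D (n-1)` to `Γs n` factor. -/
def Gmap (n : ℕ) (ξ : Linf Γ) : Linf Γ :=
  quant (trunc (B.s n) (restr (B.Γs n) (B.i (n-1) ξ)))

lemma exists_G_rep {n : ℕ} (hn : 2 ≤ n) :
    ∀ dd ∈ B.D (n-1), ∃ ξ : Linf Γ,
      restr (B.Γs n) dd = Gmap B n ξ ∧ ‖ξ - restr (B.Γs (n-1)) dd‖ ≤ 1 := by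
  have hn1 : 1 ≤ n - 1 := by omega
  have hnn : n - 1 + 1 = n := by omega
  rintro dd (hd | hd)
  · -- dd ∈ M (n-1)
    obtain ⟨m, u, hm1, hmn, hu, rfl⟩ := mem_M_struct B (n-1) dd hd
    obtain ⟨hint, hsupp, hnorm, hq⟩ := mem_quant_ball hu
    refine ⟨restr (B.Γs (n-1)) (B.i m u), ?_, ?_⟩
    · have hIR : B.i (n-1) (restr (B.Γs (n-1)) (B.i m u)) = B.i m u :=
        i_restr_eq B hm1 hmn u
      rw [Gmap, hIR]
      have hbound : ∀ γ, |restr (B.Γs n) (B.i m u) γ| ≤ B.s n := by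
        intro γ
        have h1 : ‖B.i m u‖ ≤ (B.lam:ℝ) * B.s m :=
          (norm_i_apply_le B hm1 u).trans
            (mul_le_mul_of_nonneg_left hnorm (by positivity))
        have h2 : (B.lam:ℝ) * B.s m ≤ B.s n := by
          rw [BD.s, BD.s, ← pow_succ']
          exact pow_le_pow_right₀ (one_le_lamR B) (by omega)
        by_cases hγ : γ ∈ B.Γs n
        · rw [restr_apply_mem hγ]
          exact (bcf_abs_le_norm _ γ).trans (h1.trans h2)
        · rw [restr_apply_not_mem hγ, abs_zero]; exact s_nonneg B n
      rw [trunc_eq_self_bcf hbound, quant_restr]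
    · rw [quant_restr]
      rw [norm_sub_rev]
      exact norm_quant_sub_le _
  · -- dd ∈ C (n-1)
    rw [BD.C] at hd
    rw [hnn] at hd
    obtain ⟨zz, hzz, hdef⟩ := hd
    replace hdef : quant (B.i n (quant (trunc (B.s n) (restr (B.Γs n) (B.i (n-1) zz))))) = dd :=
      hdef
    obtain ⟨hzint, hzsupp, hznorm, hzq⟩ := mem_quant_ball hzz.1
    have hsubm : B.Γs (n-1) ⊆ B.Γs n := by
      have := (B.ssubset (n-1) hn1).subset
      rwa [hnn] at this
    have hvint : IsInt (Gmap B n zz) := isInt_quant _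
    have hvsupp : ∀ γ ∉ B.Γs n, Gmap B n zz γ = 0 := by
      intro γ hγ
      rw [Gmap, quant_apply, trunc_apply, restr_apply_not_mem hγ, truncFun_zero, ent_zero]
    have hrd : restr (B.Γs n) dd = Gmap B n zz := by
      rw [← hdef]
      exact restr_quant_i B (by omega) hvint hvsupp
    refine ⟨zz, hrd, ?_⟩
    have hrm : restr (B.Γs (n-1)) dd = zz := by
      have h1 : restr (B.Γs (n-1)) dd = restr (B.Γs (n-1)) (Gmap B n zz) := by
        rw [← restr_restr hsubm dd, hrd]
      rw [h1]
      ext γ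
      by_cases hγ : γ ∈ B.Γs (n-1)
      · rw [restr_apply_mem hγ, Gmap, quant_apply, trunc_apply,
          restr_apply_mem (hsubm hγ), B.extension (n-1) hn1 zz γ hγ,
          truncFun_of_abs_le ((bcf_abs_le_norm zz γ).trans hznorm)]
        obtain ⟨m, hm⟩ := hzint γ
        rw [hm, ent_intCast]
      · rw [restr_apply_not_mem hγ, hzsupp γ hγ]
    rw [hrm, sub_self, norm_zero]
    exact zero_le_one

lemma Gmap_lip {n : ℕ} (hn : 2 ≤ n) (ξ ξ' : Linf Γ) :
    ‖Gmap B n ξ - Gmap B n ξ'‖ ≤ (B.lam:ℝ) * ‖ξ - ξ'‖ + 2 := by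
  have hn1 : 1 ≤ n - 1 := by omega
  apply bcf_norm_le (by positivity)
  intro γ
  rw [bcf_sub_apply, Gmap, Gmap, quant_apply, quant_apply, trunc_apply, trunc_apply]
  set a := restr (B.Γs n) (B.i (n-1) ξ) γ with ha
  set b := restr (B.Γs n) (B.i (n-1) ξ') γ with hb
  have h1 : |ent (truncFun (B.s n) a) - truncFun (B.s n) a| ≤ 1 := abs_ent_sub_le _
  have h2 : |ent (truncFun (B.s n) b) - truncFun (B.s n) b| ≤ 1 := abs_ent_sub_le _
  have h3 : |truncFun (B.s n) a - truncFun (B.s n) b| ≤ |a - b| := by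
    have := abs_truncFun_diff (s := B.s n) (s' := B.s n) (a := a) (b := b)
      (s_nonneg B n) (s_nonneg B n)
    simpa using this
  have h4 : |a - b| ≤ (B.lam:ℝ) * ‖ξ - ξ'‖ := by
    by_cases hγ : γ ∈ B.Γs n
    · rw [ha, hb, restr_apply_mem hγ, restr_apply_mem hγ]
      have : B.i (n-1) ξ γ - B.i (n-1) ξ' γ = (B.i (n-1) ξ - B.i (n-1) ξ') γ := rfl
      rw [this, ← map_sub]
      exact (bcf_abs_le_norm _ γ).trans (norm_i_apply_le B hn1 _)
    · rw [ha, hb, restr_apply_not_mem hγ, restr_apply_not_mem hγ, sub_zero, abs_zero]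
      positivity
  have t1 := abs_sub_le (ent (truncFun (B.s n) a)) (truncFun (B.s n) a)
    (ent (truncFun (B.s n) b))
  have t2 := abs_sub_le (truncFun (B.s n) a) (truncFun (B.s n) b)
    (ent (truncFun (B.s n) b))
  have h2' : |truncFun (B.s n) b - ent (truncFun (B.s n) b)| ≤ 1 := by
    rw [abs_sub_comm]; exact h2
  linarith

lemma D_restr_lip {n : ℕ} (hn : 2 ≤ n) {dd dd' : Linf Γ}
    (hd : dd ∈ B.D (n-1)) (hd' : dd' ∈ B.D (n-1)) :
    ‖restr (B.Γs n) dd - restr (B.Γs n) dd'‖ ≤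
      (B.lam:ℝ) * ‖restr (B.Γs (n-1)) dd - restr (B.Γs (n-1)) dd'‖ + 2*(B.lam:ℝ) + 2 := by
  obtain ⟨ξ, he, hb⟩ := exists_G_rep B hn dd hd
  obtain ⟨ξ', he', hb'⟩ := exists_G_rep B hn dd' hd'
  rw [he, he']
  have h1 : ‖ξ - ξ'‖ ≤ ‖restr (B.Γs (n-1)) dd - restr (B.Γs (n-1)) dd'‖ + 2 := by
    have key : ξ - ξ' = (ξ - restr (B.Γs (n-1)) dd) +
        (restr (B.Γs (n-1)) dd - restr (B.Γs (n-1)) dd') +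
        (restr (B.Γs (n-1)) dd' - ξ') := by abel
    rw [key]
    calc ‖_ + _ + _‖ ≤ ‖_‖ + ‖_‖ + ‖_‖ := norm_add₃_le
      _ ≤ 1 + ‖restr (B.Γs (n-1)) dd - restr (B.Γs (n-1)) dd'‖ + 1 := by
          refine add_le_add (add_le_add hb le_rfl) ?_
          rw [norm_sub_rev]; exact hb'
      _ = ‖restr (B.Γs (n-1)) dd - restr (B.Γs (n-1)) dd'‖ + 2 := by ring
  calc ‖Gmap B n ξ - Gmap B n ξ'‖ ≤ (B.lam:ℝ) * ‖ξ - ξ'‖ + 2 := Gmap_lip B hn ξ ξ'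
    _ ≤ (B.lam:ℝ) * (‖restr (B.Γs (n-1)) dd - restr (B.Γs (n-1)) dd'‖ + 2) + 2 := by
        have := mul_le_mul_of_nonneg_left h1 (by positivity : (0:ℝ) ≤ (B.lam:ℝ))
        linarith
    _ = (B.lam:ℝ) * ‖restr (B.Γs (n-1)) dd - restr (B.Γs (n-1)) dd'‖ + 2*(B.lam:ℝ) + 2 := by
        ring

lemma D_restr_bound {n : ℕ} (hn : 2 ≤ n) {dd : Linf Γ} (hd : dd ∈ B.D (n-1)) :
    ∀ γ, |restr (B.Γs n) dd γ| ≤ B.s n := by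
  obtain ⟨ξ, he, _⟩ := exists_G_rep B hn dd hd
  intro γ
  rw [he, Gmap, quant_apply, trunc_apply]
  exact (abs_ent_le _).trans (abs_truncFun_le_level (s_nonneg B n) _)

lemma D_mem_closure {n : ℕ} (hn : 2 ≤ n) {dd ζ : Linf Γ} (hd : dd ∈ B.D (n-1))
    (hζ : ζ ∈ B.M n) (heq : restr (B.Γs n) ζ = restr (B.Γs n) dd) :
    ζ ∈ B.D (n-1) := by
  have hn1 : 1 ≤ n - 1 := by omega
  have hnn : n - 1 + 1 = n := by omega
  rcases hd with hd' | hd'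
  · have hdM : dd ∈ B.M n := M_mono B (by omega) hd'
    have := restr_inj_M B n ζ hζ dd hdM heq
    rw [this]; exact Or.inl hd'
  · have hdC := hd'
    rw [BD.C, hnn] at hd'
    obtain ⟨zz, hzz, hdef⟩ := hd'
    replace hdef : quant (B.i n (quant (trunc (B.s n) (restr (B.Γs n) (B.i (n-1) zz))))) = dd :=
      hdef
    set v := quant (trunc (B.s n) (restr (B.Γs n) (B.i (n-1) zz))) with hv
    have hvint : IsInt v := isInt_quant _
    have hvsupp : ∀ γ ∉ B.Γs n, v γ = 0 := by
      intro γ hγ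
      rw [hv, quant_apply, trunc_apply, restr_apply_not_mem hγ, truncFun_zero, ent_zero]
    have hrd : restr (B.Γs n) dd = v := by
      rw [← hdef]
      exact restr_quant_i B (by omega) hvint hvsupp
    by_cases hcase : v ∈ restr (B.Γs n) '' B.M (n-1)
    · obtain ⟨z', hz', hz'eq⟩ := hcase
      have hz'M : z' ∈ B.M n := M_mono B (by omega) hz'
      have : ζ = z' := restr_inj_M B n ζ hζ z' hz'M (by rw [heq, hrd, hz'eq])
      rw [this]; exact Or.inl hz'
    · have hvball : v ∈ quant '' suppBall (B.Γs n) (B.s n) := by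
        refine quant_ball_self hvint hvsupp ?_
        apply bcf_norm_le (s_nonneg B n)
        intro γ
        rw [hv, quant_apply, trunc_apply]
        exact (abs_ent_le _).trans (abs_truncFun_le_level (s_nonneg B n) _)
      have hdM : quant (B.i n v) ∈ B.M n := by
        have h1 : quant (B.i (n-1+1) v) ∈ B.M (n-1+1) :=
          Or.inr ⟨v, ⟨by rw [hnn]; exact hvball, by rw [hnn]; exact hcase⟩, rfl⟩
        rwa [hnn] at h1
      have : ζ = quant (B.i n v) :=
        restr_inj_M B n ζ hζ _ hdM
          (by rw [heq, hrd, restr_quant_i B (by omega) hvint hvsupp])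
      rw [this, hdef]
      exact Or.inr hdC

lemma exists_nat_eq_norm {S : Set Γ} (hS : S.Finite) {f : Linf Γ} (hint : IsInt f)
    (hsupp : ∀ γ ∉ S, f γ = 0) : ∃ m : ℕ, (m:ℝ) = ‖f‖ := by
  classical
  set T : Finset ℝ := insert 0 (hS.toFinset.image fun γ => |f γ|) with hT
  have hTne : T.Nonempty := ⟨0, Finset.mem_insert_self _ _⟩
  set Mx := T.max' hTne with hMx
  have h0M : (0:ℝ) ≤ Mx := Finset.le_max' T 0 (Finset.mem_insert_self _ _)
  have hall : ∀ γ, |f γ| ≤ Mx := by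
    intro γ
    by_cases hγ : γ ∈ S
    · exact Finset.le_max' T _ (Finset.mem_insert_of_mem
        (Finset.mem_image_of_mem _ (hS.mem_toFinset.mpr hγ)))
    · rw [hsupp γ hγ, abs_zero]; exact h0M
  have hup : ‖f‖ ≤ Mx := bcf_norm_le h0M hall
  have hMmem := T.max'_mem hTne
  rcases Finset.mem_insert.mp hMmem with h | h
  · refine ⟨0, ?_⟩
    have : ‖f‖ ≤ 0 := by rw [← h]; exact hup
    have h2 := norm_nonneg f
    simp; linarith
  · obtain ⟨γ₀, _, hγ₀⟩ := Finset.mem_image.mp h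
    rw [← hMx] at hγ₀
    have hlow : Mx ≤ ‖f‖ := by rw [← hγ₀]; exact bcf_abs_le_norm f γ₀
    obtain ⟨m, hm⟩ := hint γ₀
    refine ⟨m.natAbs, ?_⟩
    have : ‖f‖ = Mx := le_antisymm hup hlow
    rw [this, ← hγ₀, hm]
    rw [Nat.cast_natAbs]
    norm_num

/-! ### chain lemmas -/

lemma chain_self {α : Type*} (T : ℕ → α → α) (a : ℕ) : chain T a a = id := by
  have : a - a = 0 := by omega
  simp [chain, this]

lemma chain_peel {α : Type*} (T : ℕ → α → α) (a k : ℕ) :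
    chain T a (a + (k+1)) = chain T a (a + k) ∘ T (a + k + 1) := by
  have h1 : a + (k+1) - a = k + 1 := by omega
  have h2 : a + k - a = k := by omega
  simp only [chain, h1, h2]

lemma chain_succ_left {α : Type*} (T : ℕ → α → α) (a : ℕ) :
    ∀ k, chain T a (a + (k+1)) = T (a+1) ∘ chain T (a+1) (a + (k+1)) := by
  intro k
  induction k with
  | zero =>
    rw [chain_peel]
    have h1 : chain T a (a + 0) = id := by rw [Nat.add_zero, chain_self]
    have h2 : chain T (a+1) (a + 1) = id := chain_self T (a+1)
    have h3 : a + 0 + 1 = a + 1 := by omega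
    rw [h1, h3, h2]
    rfl
  | succ k ih =>
    have hA : a + (k + 1 + 1) = a + (k+1) + 1 := by omega
    rw [show a + (k+1+1) = a + ((k+1)+1) from rfl, chain_peel, ih]
    have hB : chain T (a+1) ((a+1) + (k+1)) = chain T (a+1) ((a+1) + k) ∘ T ((a+1) + k + 1) :=
      chain_peel T (a+1) k
    have hC : (a+1) + (k+1) = a + (k+1+1) := by omega
    have hD : (a+1) + k = a + (k+1) := by omega
    have hE : (a+1) + k + 1 = a + (k+1) + 1 := by omega
    rw [hC, hD] at hB
    rw [hB]
    rfl

end BDAux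

namespace BDAux

variable {Γ : Type*} [TopologicalSpace Γ] [DiscreteTopology Γ]

lemma truncFun_zero_level (t : ℝ) : truncFun 0 t = 0 := by
  have h := abs_truncFun_le_level (le_refl (0:ℝ)) t
  exact abs_nonpos_iff.mp h

lemma trunc_level_zero (f : Linf Γ) : trunc (0:ℝ) f = 0 := by
  ext γ
  rw [trunc_apply, truncFun_zero_level]
  rfl

/-- The final state of the truncation chain. -/
def FinalP (i : ℕ) (y : ℕ → Linf Γ) (e : ℕ → ℕ × ℕ) (Y₀ : Linf Γ) (h : ℕ) : Prop :=
  (i = 0 ∧ trunc (h:ℝ) Y₀ = 0) ∨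
  (1 ≤ i ∧ (((h:ℝ) = ‖y (e i).1‖ - 1) ∨ trunc (h:ℝ) Y₀ = trunc ‖y (e i).1‖ Y₀))

/-- The invariant carried along the chain `ψ_{t+1} ∘ ⋯ ∘ ψ_I`. -/
def InvP (B : BD Γ) (n i I : ℕ) (y : ℕ → Linf Γ) (e : ℕ → ℕ × ℕ) (x : ℕ → Linf Γ)
    (k₀ : ℕ) (D₀ Y₀ : Linf Γ) (t : ℕ) (ζ : Linf Γ) : Prop :=
  ζ ∈ B.M n ∧ ∃ h : ℕ, restr (B.Γs n) ζ = D₀ + trunc (h:ℝ) Y₀ ∧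
    ((ζ ∈ B.D (n-1) ∪ x '' Set.Icc 1 i ∧ FinalP i y e Y₀ h) ∨
     (∃ j c : ℕ, i + 1 ≤ j ∧ j ≤ t ∧ j ≤ I ∧ 1 ≤ c ∧ ζ = x j ∧ e j = (c, k₀) ∧
       y c = trunc (h:ℝ) Y₀ ∧ (h:ℝ) = ‖y c‖))

end BDAux
/-- Proposition (Step 3): every `Ψ_{n,i} = ψ_{n,i+1} ∘ ⋯ ∘ ψ_{n,i(n)}` is
`(3λ+2)(3λ²+6λ+11)`-Lipschitz on `M_n`. -/
theorem Psi_lipschitz (B : BD Γ) (n : ℕ) (hn : 2 ≤ n)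
    (y : ℕ → Linf Γ) (hy0 : y 0 = 0) (hyinj : Function.Injective y)
    (hyrange : Set.range y =
      quant '' {z : Linf Γ | ∀ γ ∉ B.Γs n \ B.Γs (n - 1), z γ = 0})
    (hymono : ∀ j₁ j₂, j₁ ≤ j₂ → ‖y j₁‖ ≤ ‖y j₂‖)
    (kn : ℕ) (d : ℕ → Linf Γ)
    (hd_inj : Set.InjOn d (Set.Icc 1 kn))
    (hd_range : d '' Set.Icc 1 kn = B.D (n - 1))
    (I : ℕ) (e : ℕ → ℕ × ℕ)
    (he_mem : ∀ i, 1 ≤ i → i ≤ I → 1 ≤ (e i).1 ∧ 1 ≤ (e i).2 ∧ (e i).2 ≤ kn ∧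
      restr (B.Γs n \ B.Γs (n - 1)) (d (e i).2) + y (e i).1 ∈
        quant '' suppBall (B.Γs n \ B.Γs (n - 1)) (B.s n))
    (he_surj : ∀ p : ℕ × ℕ, 1 ≤ p.1 → 1 ≤ p.2 → p.2 ≤ kn →
      restr (B.Γs n \ B.Γs (n - 1)) (d p.2) + y p.1 ∈
        quant '' suppBall (B.Γs n \ B.Γs (n - 1)) (B.s n) →
      ∃ i, 1 ≤ i ∧ i ≤ I ∧ e i = p)
    (he_lex : ∀ i₁ i₂, 1 ≤ i₁ → i₁ < i₂ → i₂ ≤ I →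
      (e i₁).1 < (e i₂).1 ∨ ((e i₁).1 = (e i₂).1 ∧ (e i₁).2 < (e i₂).2))
    (x : ℕ → Linf Γ)
    (hx : ∀ i, 1 ≤ i → i ≤ I → x i ∈ B.M n ∧
      restr (B.Γs n) (x i) =
        restr (B.Γs (n - 1)) (d (e i).2) +
          restr (B.Γs n \ B.Γs (n - 1)) (d (e i).2) + y (e i).1)
    (hx_range : x '' Set.Icc 1 I = B.M n \ B.D (n - 1))
    (ψ : ℕ → Linf Γ → Linf Γ)
    (hψ_val : ∀ i, 1 ≤ i → i ≤ I → ψ i (x i) ∈ B.M n ∧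
      restr (B.Γs n) (ψ i (x i)) =
        restr (B.Γs (n - 1)) (d (e i).2) +
          restr (B.Γs n \ B.Γs (n - 1)) (d (e i).2) +
          trunc (‖y (e i).1‖ - 1) (y (e i).1))
    (hψ_id : ∀ i, 1 ≤ i → i ≤ I →
      ∀ z ∈ B.D (n - 1) ∪ x '' Set.Icc 1 (i - 1), ψ i z = z)
    : ∀ i, i < I → ∀ z ∈ B.M n, ∀ w ∈ B.M n,
      ‖chain ψ i I z - chain ψ i I w‖ ≤
        ((3 * (B.lam : ℝ) + 2) * (3 * (B.lam : ℝ) ^ 2 + 6 * (B.lam : ℝ) + 11)) * ‖z - w‖ := by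
  classical
  intro i hiI z hz w hw
  have hiI' : i ≤ I := le_of_lt hiI
  have hn1 : 1 ≤ n - 1 := by omega
  have hnpos : 1 ≤ n := by omega
  have hnn : n - 1 + 1 = n := by omega
  have hsub : B.Γs (n-1) ⊆ B.Γs n := by
    have h0 := (B.ssubset (n-1) hn1).subset
    rwa [hnn] at h0
  have hΔfin : (B.Γs n \ B.Γs (n-1)).Finite := (B.finite n hnpos).subset Set.diff_subset
  have lamR : (1:ℝ) ≤ (B.lam:ℝ) := BDAux.one_le_lamR B
  -- facts about y
  have hy_mem : ∀ c, y c ∈ quant '' {g : Linf Γ | ∀ γ ∉ B.Γs n \ B.Γs (n-1), g γ = 0} := by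
    intro c; rw [← hyrange]; exact ⟨c, rfl⟩
  have hy_supp : ∀ c, ∀ γ ∉ B.Γs n \ B.Γs (n-1), y c γ = 0 := by
    intro c γ hγ
    obtain ⟨g, hg, hgq⟩ := hy_mem c
    rw [← hgq, BDAux.quant_apply, hg γ hγ, BDAux.ent_zero]
  have hy_int : ∀ c, BDAux.IsInt (y c) := by
    intro c; obtain ⟨g, _, hgq⟩ := hy_mem c; rw [← hgq]; exact BDAux.isInt_quant g
  have hy_complete : ∀ f : Linf Γ, BDAux.IsInt f → (∀ γ ∉ B.Γs n \ B.Γs (n-1), f γ = 0) →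
      ∃ c, y c = f := by
    intro f hint hsupp
    have h0 : f ∈ quant '' {g : Linf Γ | ∀ γ ∉ B.Γs n \ B.Γs (n-1), g γ = 0} :=
      ⟨f, hsupp, BDAux.quant_eq_self hint⟩
    rw [← hyrange] at h0; exact h0
  have hy_norm_ge : ∀ c, 1 ≤ c → (1:ℝ) ≤ ‖y c‖ := by
    intro c hc
    have hne : y c ≠ 0 := by
      intro h0
      have : c = 0 := hyinj (h0.trans hy0.symm)
      omega
    have h1 := BDAux.one_le_norm_sub (hy_int c) BDAux.isInt_zero hne
    rwa [sub_zero] at h1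
  have hy_lt : ∀ c c', ‖y c‖ < ‖y c'‖ → c < c' := by
    intro c c' h0
    by_contra hcc
    push_neg at hcc
    exact absurd (hymono c' c hcc) (not_le.mpr h0)
  have hsplitD : ∀ k : ℕ, restr (B.Γs n) (d k) =
      restr (B.Γs (n-1)) (d k) + restr (B.Γs n \ B.Γs (n-1)) (d k) :=
    fun k => BDAux.restr_split hsub (d k)
  have hAle : ∀ j c k', i + 1 ≤ j → j ≤ I → e j = (c, k') → 1 ≤ i → (e i).1 ≤ c := by
    intro j c k' hij hjI hej hi1
    rcases he_lex i j hi1 (by omega) hjI with hl | ⟨hl, _⟩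
    · rw [hej] at hl; exact le_of_lt hl
    · rw [hej] at hl; exact le_of_eq hl
  -- the chain fixes D (n-1) ∪ x '' Icc 1 i
  have chain_fix : ∀ ζ, ζ ∈ B.D (n-1) ∪ x '' Set.Icc 1 i → chain ψ i I ζ = ζ := by
    intro ζ hζ
    have key : ∀ k, i + k ≤ I → chain ψ i (i + k) ζ = ζ := by
      intro k
      induction k with
      | zero => intro _; rw [Nat.add_zero, BDAux.chain_self]; rfl
      | succ k ih =>
        intro hk
        rw [BDAux.chain_peel]
        have hfix : ψ (i+k+1) ζ = ζ := by
          apply hψ_id (i+k+1) (by omega) (by omega)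
          rcases hζ with h' | h'
          · exact Or.inl h'
          · obtain ⟨j, hj, rfl⟩ := h'
            obtain ⟨hja, hjb⟩ := Set.mem_Icc.mp hj
            exact Or.inr ⟨j, Set.mem_Icc.mpr ⟨hja, by omega⟩, rfl⟩
        show chain ψ i (i+k) (ψ (i+k+1) ζ) = ζ
        rw [hfix]
        exact ih (by omega)
    have h0 := key (I - i) (by omega)
    rwa [show i + (I - i) = I by omega] at h0
  -- main structure theorem for the chain
  have FS : ∀ z', z' ∈ B.M n → ∃ (k : ℕ) (Yp : Linf Γ) (h' : ℝ),
      (1 ≤ k ∧ k ≤ kn) ∧ (∀ γ ∉ B.Γs n \ B.Γs (n-1), Yp γ = 0) ∧ 0 ≤ h' ∧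
      ((i = 0 ∧ h' = 0) ∨ (1 ≤ i ∧ (h' = ‖y (e i).1‖ - 1 ∨ h' = ‖y (e i).1‖))) ∧
      restr (B.Γs n) z' = restr (B.Γs n) (d k) + Yp ∧
      chain ψ i I z' ∈ B.M n ∧
      restr (B.Γs n) (chain ψ i I z') = restr (B.Γs n) (d k) + trunc h' Yp := by
    intro z' hz'
    by_cases hzD : z' ∈ B.D (n-1)
    · -- z' is a fixed point of the chain
      have hzd : z' ∈ d '' Set.Icc 1 kn := by rw [hd_range]; exact hzD
      obtain ⟨k, hkmem, hkz⟩ := hzd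
      obtain ⟨hka, hkb⟩ := Set.mem_Icc.mp hkmem
      have hch : chain ψ i I z' = z' := chain_fix z' (Or.inl hzD)
      by_cases hi0 : 1 ≤ i
      · refine ⟨k, 0, ‖y (e i).1‖, ⟨hka, hkb⟩, fun γ _ => rfl, norm_nonneg _,
          Or.inr ⟨hi0, Or.inr rfl⟩, ?_, ?_, ?_⟩
        · rw [hkz, add_zero]
        · rw [hch]; exact hz'
        · rw [hch, BDAux.trunc_zero_fun, hkz, add_zero]
      · refine ⟨k, 0, 0, ⟨hka, hkb⟩, fun γ _ => rfl, le_rfl,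
          Or.inl ⟨by omega, rfl⟩, ?_, ?_, ?_⟩
        · rw [hkz, add_zero]
        · rw [hch]; exact hz'
        · rw [hch, BDAux.trunc_zero_fun, hkz, add_zero]
    · -- z' = x j₀ for some j₀
      have hzx : z' ∈ x '' Set.Icc 1 I := by rw [hx_range]; exact ⟨hz', hzD⟩
      obtain ⟨j₀, hj₀mem, rfl⟩ := hzx
      obtain ⟨hj₀a, hj₀b⟩ := Set.mem_Icc.mp hj₀mem
      rcases hej₀ : e j₀ with ⟨a₀, k₀⟩
      have ha₀ : 1 ≤ a₀ := by
        have h0 := (he_mem j₀ hj₀a hj₀b).1; rw [hej₀] at h0; exact h0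
      have hk₀1 : 1 ≤ k₀ := by
        have h0 := (he_mem j₀ hj₀a hj₀b).2.1; rw [hej₀] at h0; exact h0
      have hk₀2 : k₀ ≤ kn := by
        have h0 := (he_mem j₀ hj₀a hj₀b).2.2.1; rw [hej₀] at h0; exact h0
      have hmem₀' : restr (B.Γs n \ B.Γs (n-1)) (d k₀) + y a₀ ∈
          quant '' suppBall (B.Γs n \ B.Γs (n-1)) (B.s n) := by
        have h0 := (he_mem j₀ hj₀a hj₀b).2.2.2; rw [hej₀] at h0; exact h0
      have hdD : d k₀ ∈ B.D (n-1) := by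
        rw [← hd_range]; exact ⟨k₀, Set.mem_Icc.mpr ⟨hk₀1, hk₀2⟩, rfl⟩
      have hrx : restr (B.Γs n) (x j₀) = restr (B.Γs (n-1)) (d k₀) +
          restr (B.Γs n \ B.Γs (n-1)) (d k₀) + y a₀ := by
        have h0 := (hx j₀ hj₀a hj₀b).2; rw [hej₀] at h0; exact h0
      have hrz : restr (B.Γs n) (x j₀) = restr (B.Γs n) (d k₀) + y a₀ := by
        rw [hrx, hsplitD k₀]
      obtain ⟨nY, hnY⟩ := BDAux.exists_nat_eq_norm hΔfin (hy_int a₀) (hy_supp a₀)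
      have hYle : ∀ γ, |y a₀ γ| ≤ (nY:ℝ) := by
        intro γ; rw [hnY]; exact BDAux.bcf_abs_le_norm _ γ
      -- one step of the chain preserves the invariant
      have step : ∀ t ζ, i ≤ t → t + 1 ≤ I →
          BDAux.InvP B n i I y e x k₀ (restr (B.Γs n) (d k₀)) (y a₀) (t+1) ζ →
          BDAux.InvP B n i I y e x k₀ (restr (B.Γs n) (d k₀)) (y a₀) t (ψ (t+1) ζ) := by
        intro t ζ hit htI hInv
        obtain ⟨hζM, h, hres, hstate⟩ := hInv
        rcases hstate with ⟨hmem, hfin⟩ | ⟨j, c, hj1, hj2, hj3, hc1, hζeq, hejc, hyc, hhc⟩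
        · -- fixed element
          have hfix : ψ (t+1) ζ = ζ := by
            apply hψ_id (t+1) (by omega) htI
            rcases hmem with h' | h'
            · exact Or.inl h'
            · obtain ⟨jj, hjj, rfl⟩ := h'
              obtain ⟨hjja, hjjb⟩ := Set.mem_Icc.mp hjj
              exact Or.inr ⟨jj, Set.mem_Icc.mpr ⟨hjja, by omega⟩, rfl⟩
          rw [hfix]
          exact ⟨hζM, h, hres, Or.inl ⟨hmem, hfin⟩⟩
        · rcases Nat.lt_or_ge j (t+1) with hjt | hjt
          · -- not yet the turn of x j
            have hfix : ψ (t+1) ζ = ζ := by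
              rw [hζeq]
              exact hψ_id (t+1) (by omega) htI (x j)
                (Or.inr ⟨j, Set.mem_Icc.mpr ⟨by omega, by omega⟩, rfl⟩)
            rw [hfix]
            exact ⟨hζM, h, hres, Or.inr ⟨j, c, hj1, by omega, hj3, hc1, hζeq, hejc, hyc, hhc⟩⟩
          · -- the move: j = t+1
            have hjeq : j = t + 1 := by omega
            subst hjeq
            subst hζeq
            obtain ⟨hψM, hψres⟩ := hψ_val (t+1) (by omega) htI
            rw [hejc] at hψres
            have hψres' : restr (B.Γs n) (ψ (t+1) (x (t+1))) =
                restr (B.Γs (n-1)) (d k₀) + restr (B.Γs n \ B.Γs (n-1)) (d k₀) +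
                trunc (‖y c‖ - 1) (y c) := hψres
            have hh1 : 1 ≤ h := by
              have h1 := hy_norm_ge c hc1
              rw [← hhc] at h1
              exact_mod_cast h1
            have hcast : ((h - 1 : ℕ) : ℝ) = (h:ℝ) - 1 := by
              rw [Nat.cast_sub hh1, Nat.cast_one]
            have htlevel : ‖y c‖ - 1 = ((h - 1 : ℕ) : ℝ) := by rw [hcast, ← hhc]
            have htt : trunc (‖y c‖ - 1) (y c) = trunc ((h-1:ℕ):ℝ) (y a₀) := by
              rw [htlevel, hyc]
              exact BDAux.trunc_trunc_bcf (by positivity) (by rw [hcast]; linarith) (y a₀)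
            have hresψ : restr (B.Γs n) (ψ (t+1) (x (t+1))) =
                restr (B.Γs n) (d k₀) + trunc ((h-1:ℕ):ℝ) (y a₀) := by
              rw [hψres', htt, hsplitD k₀]
            have hex : ∃ γ, (h:ℝ) ≤ |y a₀ γ| := by
              by_contra hno
              push_neg at hno
              have hall : ∀ γ, |y a₀ γ| ≤ (h:ℝ) - 1 := by
                intro γ
                obtain ⟨m, hm⟩ := hy_int a₀ γ
                have h2 := hno γ
                rw [hm, ← Int.cast_abs] at h2 ⊢
                have h3 : |m| < (h:ℤ) := by exact_mod_cast h2
                have h4 : |m| ≤ (h:ℤ) - 1 := by omega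
                exact_mod_cast h4
              have h5 : trunc ((h:ℕ):ℝ) (y a₀) = y a₀ :=
                BDAux.trunc_eq_self_bcf (fun γ => (hall γ).trans (by linarith))
              have h6 : ‖y a₀‖ ≤ (h:ℝ) - 1 := by
                apply BDAux.bcf_norm_le ?_ hall
                have : (1:ℝ) ≤ (h:ℝ) := by exact_mod_cast hh1
                linarith
              have h7 : ‖y c‖ ≤ (h:ℝ) - 1 := by rw [hyc, h5]; exact h6
              rw [← hhc] at h7
              linarith
            obtain ⟨γ₀, hγ₀⟩ := hex
            have hc1R : ((h-1:ℕ):ℝ) ≤ |y a₀ γ₀| := by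
              rw [hcast]; linarith
            by_cases hzero : trunc ((h-1:ℕ):ℝ) (y a₀) = 0
            · -- the move exits into D (n-1)
              have hψD : ψ (t+1) (x (t+1)) ∈ B.D (n-1) := by
                apply BDAux.D_mem_closure B hn hdD hψM
                rw [hresψ, hzero, add_zero]
              have hh1eq : h = 1 := by
                have hA : |truncFun ((h-1:ℕ):ℝ) (y a₀ γ₀)| = ((h-1:ℕ):ℝ) :=
                  BDAux.abs_truncFun_eq (by positivity) hc1R
                have hB : truncFun ((h-1:ℕ):ℝ) (y a₀ γ₀) = 0 := by
                  have h0 := congrArg (fun f : Linf Γ => f γ₀) hzero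
                  simpa [BDAux.trunc_apply] using h0
                rw [hB, abs_zero] at hA
                have h0 : ((0:ℕ):ℝ) = ((h - 1 : ℕ):ℝ) := by rw [Nat.cast_zero]; exact hA
                have : (0:ℕ) = h - 1 := Nat.cast_injective h0
                omega
              refine ⟨hψM, h - 1, hresψ, Or.inl ⟨Or.inl hψD, ?_⟩⟩
              rcases Nat.eq_zero_or_pos i with hi0 | hipos
              · exact Or.inl ⟨hi0, hzero⟩
              · refine Or.inr ⟨hipos, Or.inl ?_⟩
                have hAc : (e i).1 ≤ c := hAle (t+1) c k₀ (by omega) htI hejc hipos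
                have hA1 : (1:ℝ) ≤ ‖y (e i).1‖ := hy_norm_ge _ (he_mem i hipos hiI').1
                have hA2 : ‖y (e i).1‖ ≤ ‖y c‖ := hymono _ _ hAc
                have hA3 : ‖y c‖ = 1 := by
                  rw [← hhc, hh1eq, Nat.cast_one]
                have hA4 : ‖y (e i).1‖ = 1 := le_antisymm (by rw [← hA3]; exact hA2) hA1
                rw [hA4, hh1eq]
                norm_num
            · -- the move lands on an earlier x j'
              have hτint : BDAux.IsInt (trunc ((h-1:ℕ):ℝ) (y a₀)) :=
                BDAux.isInt_trunc (hy_int a₀) (h-1)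
              have hτsupp : ∀ γ ∉ B.Γs n \ B.Γs (n-1), trunc ((h-1:ℕ):ℝ) (y a₀) γ = 0 := by
                intro γ hγ
                rw [BDAux.trunc_apply, hy_supp a₀ γ hγ, BDAux.truncFun_zero]
              obtain ⟨c', hc'⟩ := hy_complete _ hτint hτsupp
              have hc'1 : 1 ≤ c' := by
                rcases Nat.eq_zero_or_pos c' with h0 | h'
                · exfalso; rw [h0, hy0] at hc'; exact hzero hc'.symm
                · exact h'
              have hτnorm : ‖y c'‖ = ((h-1:ℕ):ℝ) := by
                apply le_antisymm
                · rw [hc']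
                  apply BDAux.bcf_norm_le (by positivity)
                  intro γ
                  rw [BDAux.trunc_apply]
                  exact BDAux.abs_truncFun_le_level (by positivity) _
                · have hA : |truncFun ((h-1:ℕ):ℝ) (y a₀ γ₀)| = ((h-1:ℕ):ℝ) :=
                    BDAux.abs_truncFun_eq (by positivity) hc1R
                  rw [← hA, hc']
                  have h0 : trunc ((h-1:ℕ):ℝ) (y a₀) γ₀ = truncFun ((h-1:ℕ):ℝ) (y a₀ γ₀) :=
                    BDAux.trunc_apply _ _ _
                  rw [← h0]
                  exact BDAux.bcf_abs_le_norm _ γ₀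
              have hmemball : restr (B.Γs n \ B.Γs (n-1)) (d k₀) + y c' ∈
                  quant '' suppBall (B.Γs n \ B.Γs (n-1)) (B.s n) := by
                refine BDAux.quant_ball_self
                  (BDAux.isInt_add (BDAux.isInt_restr (BDAux.D_isInt B hdD) _) (hy_int c'))
                  ?_ ?_
                · intro γ hγ
                  rw [BDAux.bcf_add_apply, BDAux.restr_apply_not_mem hγ, hy_supp c' γ hγ,
                    add_zero]
                · apply BDAux.bcf_norm_le (BDAux.s_nonneg B n)
                  intro γ
                  rw [BDAux.bcf_add_apply]
                  by_cases hγ : γ ∈ B.Γs n \ B.Γs (n-1)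
                  · have hb1 : |d k₀ γ| ≤ B.s n := by
                      have h0 := BDAux.D_restr_bound B hn hdD γ
                      rwa [BDAux.restr_apply_mem hγ.1] at h0
                    have hb2 : |d k₀ γ + y a₀ γ| ≤ B.s n := by
                      have h1 := (BDAux.mem_quant_ball hmem₀').2.2.1
                      have h2 := BDAux.bcf_abs_le_norm
                        (restr (B.Γs n \ B.Γs (n-1)) (d k₀) + y a₀) γ
                      rw [BDAux.bcf_add_apply, BDAux.restr_apply_mem hγ] at h2
                      exact h2.trans h1
                    rw [BDAux.restr_apply_mem hγ, hc', BDAux.trunc_apply]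
                    exact BDAux.abs_add_truncFun_le (by positivity) hb1 hb2
                  · rw [BDAux.restr_apply_not_mem hγ, hy_supp c' γ hγ, add_zero, abs_zero]
                    exact BDAux.s_nonneg B n
              obtain ⟨j', hj'1, hj'2, hej'⟩ := he_surj (c', k₀) hc'1 hk₀1 hk₀2 hmemball
              have hxj' := hx j' hj'1 hj'2
              have hxj'res : restr (B.Γs n) (x j') =
                  restr (B.Γs (n-1)) (d k₀) + restr (B.Γs n \ B.Γs (n-1)) (d k₀) + y c' := by
                have h0 := hxj'.2
                rw [hej'] at h0
                exact h0
              have hreseq : restr (B.Γs n) (x j') =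
                  restr (B.Γs n) (d k₀) + trunc ((h-1:ℕ):ℝ) (y a₀) := by
                rw [hxj'res, hc', hsplitD k₀]
              have hψx : ψ (t+1) (x (t+1)) = x j' :=
                BDAux.restr_inj_M B n _ hψM _ hxj'.1 (by rw [hresψ, hreseq])
              have hcc' : c' < c := by
                apply hy_lt
                rw [hτnorm, ← hhc, hcast]
                have h0 : (1:ℝ) ≤ (h:ℝ) := by exact_mod_cast hh1
                linarith
              have hj't : j' ≤ t := by
                by_contra hcon
                push_neg at hcon
                have hcon' : t + 1 ≤ j' := hcon
                rcases eq_or_lt_of_le hcon' with heq' | hlt'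
                · rw [← heq'] at hej'
                  have h12 : (c, k₀) = (c', k₀) := hejc.symm.trans hej'
                  have h13 : c = c' := by
                    have h0 := congrArg Prod.fst h12
                    simpa using h0
                  omega
                · rcases he_lex (t+1) j' (by omega) hlt' hj'2 with hl | ⟨hl, _⟩
                  · rw [hejc, hej'] at hl
                    simp only [] at hl
                    omega
                  · rw [hejc, hej'] at hl
                    simp only [] at hl
                    omega
              rw [hψx]
              rcases Nat.lt_or_ge i j' with hij' | hij'
              · exact ⟨hxj'.1, h - 1, hreseq,
                  Or.inr ⟨j', c', hij', hj't, hj'2, hc'1, rfl, hej', hc', hτnorm.symm⟩⟩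
              · refine ⟨hxj'.1, h - 1, hreseq,
                  Or.inl ⟨Or.inr ⟨j', Set.mem_Icc.mpr ⟨hj'1, hij'⟩, rfl⟩, ?_⟩⟩
                have hipos : 1 ≤ i := le_trans hj'1 hij'
                refine Or.inr ⟨hipos, ?_⟩
                obtain ⟨nA, hnA⟩ := BDAux.exists_nat_eq_norm hΔfin (hy_int (e i).1)
                  (hy_supp (e i).1)
                have hc'A : c' ≤ (e i).1 := by
                  rcases eq_or_lt_of_le hij' with heq' | hlt'
                  · rw [heq'] at hej'
                    rw [hej']
                  · rcases he_lex j' i hj'1 hlt' hiI' with hl | ⟨hl, _⟩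
                    · rw [hej'] at hl; exact le_of_lt hl
                    · rw [hej'] at hl; exact le_of_eq hl
                have hAc : (e i).1 ≤ c := hAle (t+1) c k₀ (by omega) htI hejc hipos
                have hle1 : ‖y c'‖ ≤ ‖y (e i).1‖ := hymono _ _ hc'A
                have hle2 : ‖y (e i).1‖ ≤ ‖y c‖ := hymono _ _ hAc
                have e1 : h - 1 ≤ nA := by
                  have h0 : ((h-1:ℕ):ℝ) ≤ (nA:ℝ) := by rw [hnA, ← hτnorm]; exact hle1
                  exact_mod_cast h0
                have e2 : nA ≤ h := by
                  have h0 : (nA:ℝ) ≤ (h:ℝ) := by rw [hnA, hhc]; exact hle2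
                  exact_mod_cast h0
                have hsplit2 : nA = h - 1 ∨ nA = h := by omega
                rcases hsplit2 with hA' | hA'
                · right
                  rw [← hnA, hA']
                · left
                  rw [← hnA, hA', hcast]
      -- initial state of the invariant
      have hxj₀M : x j₀ ∈ B.M n := (hx j₀ hj₀a hj₀b).1
      have init : BDAux.InvP B n i I y e x k₀ (restr (B.Γs n) (d k₀)) (y a₀) I (x j₀) := by
        refine ⟨hxj₀M, nY, ?_, ?_⟩
        · rw [BDAux.trunc_eq_self_bcf hYle, hrz]
        · rcases Nat.lt_or_ge i j₀ with hij | hij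
          · exact Or.inr ⟨j₀, a₀, hij, hj₀b, hj₀b, ha₀, rfl, hej₀,
              (BDAux.trunc_eq_self_bcf hYle).symm, hnY⟩
          · refine Or.inl ⟨Or.inr ⟨j₀, Set.mem_Icc.mpr ⟨hj₀a, hij⟩, rfl⟩, ?_⟩
            have hipos : 1 ≤ i := le_trans hj₀a hij
            refine Or.inr ⟨hipos, Or.inr ?_⟩
            have ha₀A : a₀ ≤ (e i).1 := by
              rcases eq_or_lt_of_le hij with heq' | hlt'
              · rw [← heq', hej₀]
              · rcases he_lex j₀ i hj₀a hlt' hiI' with hl | ⟨hl, _⟩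
                · rw [hej₀] at hl; exact le_of_lt hl
                · rw [hej₀] at hl; exact le_of_eq hl
            have hle : ‖y a₀‖ ≤ ‖y (e i).1‖ := hymono _ _ ha₀A
            rw [BDAux.trunc_eq_self_bcf hYle, BDAux.trunc_eq_self_bcf
              (fun γ => (BDAux.bcf_abs_le_norm _ γ).trans hle)]
      -- downward induction along the chain
      have main : ∀ m t, t + m = I → i ≤ t →
          BDAux.InvP B n i I y e x k₀ (restr (B.Γs n) (d k₀)) (y a₀) t
            (chain ψ t I (x j₀)) := by
        intro m
        induction m with
        | zero =>
          intro t ht _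
          have h0 : t = I := by omega
          subst h0
          rw [BDAux.chain_self]
          exact init
        | succ m ih =>
          intro t ht hit
          have hchain := congrFun (BDAux.chain_succ_left ψ t m) (x j₀)
          rw [ht] at hchain
          rw [hchain]
          exact step t _ hit (by omega) (ih (t+1) (by omega) (by omega))
      obtain ⟨hchM, hfh, hchres, hst⟩ := main (I - i) i (by omega) le_rfl
      have hfin : BDAux.FinalP i y e (y a₀) hfh := by
        rcases hst with ⟨_, hf⟩ | ⟨j, c, hj1, hj2, _, _, _, _, _, _⟩
        · exact hf
        · omega
      rcases hfin with ⟨hi0, htr0⟩ | ⟨hipos, hca⟩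
      · refine ⟨k₀, y a₀, 0, ⟨hk₀1, hk₀2⟩, hy_supp a₀, le_rfl, Or.inl ⟨hi0, rfl⟩, hrz,
          hchM, ?_⟩
        rw [hchres, htr0, BDAux.trunc_level_zero]
      · rcases hca with hc1 | hc2
        · refine ⟨k₀, y a₀, ‖y (e i).1‖ - 1, ⟨hk₀1, hk₀2⟩, hy_supp a₀, ?_,
            Or.inr ⟨hipos, Or.inl rfl⟩, hrz, hchM, ?_⟩
          · rw [← hc1]; positivity
          · rw [hchres, hc1]
        · refine ⟨k₀, y a₀, ‖y (e i).1‖, ⟨hk₀1, hk₀2⟩, hy_supp a₀, norm_nonneg _,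
            Or.inr ⟨hipos, Or.inr rfl⟩, hrz, hchM, ?_⟩
          rw [hchres, hc2]
  -- assemble the Lipschitz estimate
  obtain ⟨kz, Yz, hz', hkz, hYzsupp, hz'0, hz'case, hrzz, hchzM, hchzres⟩ := FS z hz
  obtain ⟨kw, Yw, hw', hkw, hYwsupp, hw'0, hw'case, hrww, hchwM, hchwres⟩ := FS w hw
  by_cases hzw : z = w
  · rw [hzw]
    simp
  · have hδ1 : (1:ℝ) ≤ ‖z - w‖ :=
      BDAux.one_le_norm_sub (BDAux.M_isInt B hz) (BDAux.M_isInt B hw) hzw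
    have hdkz : d kz ∈ B.D (n-1) := by
      rw [← hd_range]; exact ⟨kz, Set.mem_Icc.mpr ⟨hkz.1, hkz.2⟩, rfl⟩
    have hdkw : d kw ∈ B.D (n-1) := by
      rw [← hd_range]; exact ⟨kw, Set.mem_Icc.mpr ⟨hkw.1, hkw.2⟩, rfl⟩
    have hE4 : ∀ (u : Linf Γ) (k : ℕ) (Yp : Linf Γ),
        restr (B.Γs n) u = restr (B.Γs n) (d k) + Yp →
        (∀ γ ∉ B.Γs n \ B.Γs (n-1), Yp γ = 0) →
        restr (B.Γs (n-1)) (d k) = restr (B.Γs (n-1)) u := by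
      intro u k Yp hres hsupp
      ext γ
      by_cases hγ : γ ∈ B.Γs (n-1)
      · rw [BDAux.restr_apply_mem hγ, BDAux.restr_apply_mem hγ]
        have h1 : restr (B.Γs n) u γ = restr (B.Γs n) (d k) γ + Yp γ := by
          rw [hres, BDAux.bcf_add_apply]
        rw [BDAux.restr_apply_mem (hsub hγ), BDAux.restr_apply_mem (hsub hγ),
          hsupp γ (fun hd' => hd'.2 hγ), add_zero] at h1
        exact h1.symm
      · rw [BDAux.restr_apply_not_mem hγ, BDAux.restr_apply_not_mem hγ]
    have hE4z := hE4 z kz Yz hrzz hYzsupp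
    have hE4w := hE4 w kw Yw hrww hYwsupp
    have hE5 : ‖restr (B.Γs (n-1)) (d kz) - restr (B.Γs (n-1)) (d kw)‖ ≤ ‖z - w‖ := by
      rw [hE4z, hE4w, ← BDAux.restr_sub]
      exact BDAux.norm_restr_le _ _
    have hE3 : ‖restr (B.Γs n) (d kz) - restr (B.Γs n) (d kw)‖ ≤
        (B.lam:ℝ) * ‖z - w‖ + 2*(B.lam:ℝ) + 2 := by
      refine (BDAux.D_restr_lip B hn hdkz hdkw).trans ?_
      have h0 := mul_le_mul_of_nonneg_left hE5 (by positivity : (0:ℝ) ≤ (B.lam:ℝ))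
      linarith
    have hYzeq : Yz = restr (B.Γs n) z - restr (B.Γs n) (d kz) := by rw [hrzz]; abel
    have hYweq : Yw = restr (B.Γs n) w - restr (B.Γs n) (d kw) := by rw [hrww]; abel
    have hE6 : ‖Yz - Yw‖ ≤ ‖z - w‖ + ((B.lam:ℝ) * ‖z - w‖ + 2*(B.lam:ℝ) + 2) := by
      have key : Yz - Yw = restr (B.Γs n) (z - w) -
          (restr (B.Γs n) (d kz) - restr (B.Γs n) (d kw)) := by
        rw [hYzeq, hYweq, BDAux.restr_sub]; abel
      rw [key]
      refine (norm_sub_le _ _).trans ?_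
      exact add_le_add (BDAux.norm_restr_le _ _) hE3
    have hhh : |hz' - hw'| ≤ 1 := by
      rcases hz'case with ⟨hi0, hz'e⟩ | ⟨hip, hz'e⟩ <;>
        rcases hw'case with ⟨hi0', hw'e⟩ | ⟨hip', hw'e⟩
      · rw [hz'e, hw'e, sub_zero, abs_zero]; exact zero_le_one
      · omega
      · omega
      · rcases hz'e with h1 | h1 <;> rcases hw'e with h2 | h2 <;> rw [h1, h2] <;>
          (rw [abs_le]; constructor <;> linarith)
    have hE7 : ‖trunc hz' Yz - trunc hw' Yw‖ ≤ ‖Yz - Yw‖ + 1 := by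
      apply BDAux.bcf_norm_le (by positivity)
      intro γ
      rw [BDAux.bcf_sub_apply, BDAux.trunc_apply, BDAux.trunc_apply]
      have h1 := BDAux.abs_truncFun_diff (a := Yz γ) (b := Yw γ) hz'0 hw'0
      have h2 : |Yz γ - Yw γ| ≤ ‖Yz - Yw‖ := by
        rw [← BDAux.bcf_sub_apply]; exact BDAux.bcf_abs_le_norm _ γ
      linarith
    have hE8 : ‖restr (B.Γs n) (chain ψ i I z) - restr (B.Γs n) (chain ψ i I w)‖ ≤
        (2*(B.lam:ℝ)+1) * ‖z - w‖ + (4*(B.lam:ℝ)+5) := by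
      have key : restr (B.Γs n) (chain ψ i I z) - restr (B.Γs n) (chain ψ i I w) =
          (restr (B.Γs n) (d kz) - restr (B.Γs n) (d kw)) +
            (trunc hz' Yz - trunc hw' Yw) := by
        rw [hchzres, hchwres]; abel
      rw [key]
      refine (norm_add_le _ _).trans ?_
      have h0 := hE7
      have h1 := hE6
      linarith [hE3]
    have hsep := BDAux.sep_M B hnpos hchzM hchwM
    refine hsep.trans ?_
    have h9 := mul_le_mul_of_nonneg_left hE8 (by positivity : (0:ℝ) ≤ (B.lam:ℝ))
    have h10 : (9*(B.lam:ℝ)^3 + 22*(B.lam:ℝ)^2 + 44*(B.lam:ℝ) + 22) * 1 ≤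
        (9*(B.lam:ℝ)^3 + 22*(B.lam:ℝ)^2 + 44*(B.lam:ℝ) + 22) * ‖z - w‖ := by
      apply mul_le_mul_of_nonneg_left hδ1
      positivity
    nlinarith [lamR, hδ1, sq_nonneg ((B.lam:ℝ) - 1), sq_nonneg ((B.lam:ℝ))]
end
end
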